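/- arXiv:1207.6143 — 7 statements merged into one kernel-verified Lean document; each statement's English description precedes it below -/
import Mathlib

section
/- For a finite Blaschke product B of degree n with zeros in the open unit disk, the derivative of the boundary argument function φ(t) = arg(e^{it} B(e^{it})) satisfies φ'(t) = 1 + |B'(e^{it})| > 0 for all t; in particular e^{it}B(e^{it}) traverses the unit circle monotonically. -/
open Complex

set_option maxHeartbeats 1000000

/-- For a finite Blaschke product `B` of degree `n` with zeros in the open unit disk,
any continuous (differentiable) branch `φ` of the argument of `t ↦ e^{it} B(e^{it})`
satisfies `φ'(t) = 1 + |B'(e^{it})| > 0` for all `t`. -/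
theorem blaschke_boundary_argument_monotone (n : ℕ) (c : ℂ) (hc : ‖c‖ = 1)
    (a : Fin n → ℂ) (ha : ∀ k, ‖a k‖ < 1) (B : ℂ → ℂ)
    (hB : ∀ z : ℂ, B z = c * ∏ k, (z - a k) / (1 - (starRingEnd ℂ) (a k) * z))
    (φ : ℝ → ℝ) (hφ : Differentiable ℝ φ)
    (hbranch : ∀ t : ℝ, Complex.exp (φ t * Complex.I) =
      Complex.exp (t * Complex.I) * B (Complex.exp (t * Complex.I))) :
    ∀ t : ℝ, deriv φ t = 1 + ‖deriv B (Complex.exp (t * Complex.I))‖ ∧ 0 < deriv φ t := by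
  intro t
  set z : ℂ := Complex.exp (t * Complex.I) with hzdef
  have hz : ‖z‖ = 1 := by
    simpa [hzdef] using Complex.abs_exp_ofReal_mul_I t
  have hz0 : z ≠ 0 := by
    intro h; rw [h] at hz; simp at hz
  have hza : ∀ k, z - a k ≠ 0 := by
    intro k h
    have h1 : z = a k := sub_eq_zero.mp h
    have := ha k
    rw [← h1, hz] at this
    linarith
  have hd : ∀ k, (1 : ℂ) - (starRingEnd ℂ) (a k) * z ≠ 0 := by
    intro k h
    have h1 : (1 : ℂ) = (starRingEnd ℂ) (a k) * z := sub_eq_zero.mp h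
    have h2 : (1 : ℝ) = ‖(starRingEnd ℂ) (a k) * z‖ := by
      rw [← h1]; simp
    rw [norm_mul, hz, mul_one, RCLike.norm_conj] at h2
    linarith [ha k]
  have hconj : ∀ k, (1 : ℂ) - (starRingEnd ℂ) (a k) * z
      = z * (starRingEnd ℂ) (z - a k) := by
    intro k
    have h1 : z * (starRingEnd ℂ) z = 1 := by
      rw [Complex.mul_conj]
      norm_cast
      rw [Complex.normSq_eq_norm_sq, hz]; norm_num
    rw [map_sub, mul_sub, h1]; ring
  -- auxiliary functions
  set fb : Fin n → ℂ → ℂ := fun k w => (w - a k) / (1 - (starRingEnd ℂ) (a k) * w) with hfbdef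
  set Db : Fin n → ℂ := fun k =>
    (1 - (starRingEnd ℂ) (a k) * a k) / (1 - (starRingEnd ℂ) (a k) * z) ^ 2 with hDbdef
  have hfb : ∀ k, HasDerivAt (fb k) (Db k) z := by
    intro k
    have key := (((hasDerivAt_id z).sub_const (a k)).div
      (((hasDerivAt_id z).const_mul ((starRingEnd ℂ) (a k))).const_sub 1) (hd k))
    convert key using 1
    all_goals try rfl
    simp only [hDbdef]
    congr 1
    ring
  have hP : HasDerivAt (fun w => ∏ k, fb k w)
      (∑ k, (∏ j ∈ Finset.univ.erase k, fb j z) • Db k) z :=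
    HasDerivAt.fun_finsetProd (fun k _ => hfb k)
  set D : ℂ := c * ∑ k, (∏ j ∈ Finset.univ.erase k, fb j z) • Db k with hDdef
  have hBfun : B = fun w => c * ∏ k, fb k w := funext hB
  have hDB : HasDerivAt B D z := by
    rw [hBfun]; exact HasDerivAt.const_mul c hP
  -- the real quantity
  set r : ℝ := ∑ k, (1 - ‖a k‖ ^ 2) / ‖z - a k‖ ^ 2 with hrdef
  have hr0 : 0 ≤ r := by
    apply Finset.sum_nonneg
    intro k _
    have h1 := ha k
    have h2 := norm_nonneg (a k)
    have h3 : (0:ℝ) ≤ ‖z - a k‖ ^ 2 := sq_nonneg _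
    apply div_nonneg _ h3
    nlinarith
  -- per-factor identity
  have hterm : ∀ k, z * Db k = fb k z * ((1 - ‖a k‖ ^ 2) / ‖z - a k‖ ^ 2 : ℝ) := by
    intro k
    have hna : ((‖a k‖ : ℂ)) ^ 2 = (starRingEnd ℂ) (a k) * a k := by
      rw [mul_comm, Complex.mul_conj, Complex.normSq_eq_norm_sq]
      norm_cast
    have hnz : ((‖z - a k‖ : ℂ)) ^ 2 = (z - a k) * (starRingEnd ℂ) (z - a k) := by
      rw [Complex.mul_conj, Complex.normSq_eq_norm_sq]
      norm_cast
    have hcz : ((starRingEnd ℂ) (z - a k)) ≠ 0 := by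
      rw [starRingEnd_apply]
      exact star_ne_zero.mpr (hza k)
    simp only [hDbdef, hfbdef]
    push_cast
    rw [hna, hnz, hconj k]
    set W : ℂ := (starRingEnd ℂ) (z - a k) with hW
    field_simp [hz0, hza k, hcz]
  push_cast at hterm
  -- key identity z * D = B z * r
  have key : ∀ k : Fin n, (∏ j, fb j z) * ((1 - (‖a k‖ : ℂ) ^ 2) / (‖z - a k‖ : ℂ) ^ 2)
      = (∏ j ∈ Finset.univ.erase k, fb j z) * (z * Db k) := by
    intro k
    rw [hterm k, ← Finset.prod_erase_mul Finset.univ (fun j => fb j z) (Finset.mem_univ k)]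
    ring
  have hzD : z * D = B z * (r : ℝ) := by
    have hBz : B z = c * ∏ k, fb k z := hB z
    rw [hDdef, hBz, hrdef]
    push_cast
    simp only [smul_eq_mul, Finset.mul_sum]
    apply Finset.sum_congr rfl
    intro k _
    linear_combination (-c) * key k
  -- norm of B z is 1
  have hBz1 : ‖B z‖ = 1 := by
    rw [hB z, norm_mul, hc, one_mul, norm_prod]
    apply Finset.prod_eq_one
    intro k _
    rw [norm_div, hconj k, norm_mul, hz, one_mul, RCLike.norm_conj]
    exact div_self (norm_ne_zero_iff.mpr (hza k))
  have hBz0 : B z ≠ 0 := by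
    intro h; rw [h] at hBz1; simp at hBz1
  -- norm of D is r
  have hnD : ‖D‖ = r := by
    have h4 : ‖z * D‖ = r := by
      rw [hzD, norm_mul, hBz1, one_mul]
      simp [Real.norm_eq_abs, _root_.abs_of_nonneg hr0]
    rwa [norm_mul, hz, one_mul] at h4
  -- differentiate the branch relation
  have hφt : HasDerivAt φ (deriv φ t) t := (hφ t).hasDerivAt
  have hL : HasDerivAt (fun s : ℝ => Complex.exp ((φ s : ℂ) * Complex.I))
      (Complex.exp ((φ t : ℂ) * Complex.I) * ((Complex.ofReal (deriv φ t)) * Complex.I)) t :=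
    (hφt.ofReal_comp.mul_const Complex.I).cexp
  have hexp : HasDerivAt (fun w : ℂ => Complex.exp (w * Complex.I))
      (Complex.exp ((t : ℂ) * Complex.I) * (1 * Complex.I)) (t : ℂ) :=
    ((hasDerivAt_id (t : ℂ)).mul_const Complex.I).cexp
  have hcomp : HasDerivAt (fun w : ℂ => B (Complex.exp (w * Complex.I)))
      (D * (Complex.exp ((t : ℂ) * Complex.I) * (1 * Complex.I))) (t : ℂ) :=
    hDB.comp (t : ℂ) hexp
  have hRc : HasDerivAt
      (fun w : ℂ => Complex.exp (w * Complex.I) * B (Complex.exp (w * Complex.I)))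
      (Complex.exp ((t : ℂ) * Complex.I) * (1 * Complex.I) * B z
        + z * (D * (Complex.exp ((t : ℂ) * Complex.I) * (1 * Complex.I)))) (t : ℂ) :=
    hexp.mul hcomp
  have hR : HasDerivAt
      (fun s : ℝ => Complex.exp ((s : ℂ) * Complex.I) * B (Complex.exp ((s : ℂ) * Complex.I)))
      (Complex.exp ((t : ℂ) * Complex.I) * (1 * Complex.I) * B z
        + z * (D * (Complex.exp ((t : ℂ) * Complex.I) * (1 * Complex.I)))) t :=
    hRc.comp_ofReal
  have hfun : (fun s : ℝ => Complex.exp ((φ s : ℂ) * Complex.I))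
      = fun s : ℝ => Complex.exp ((s : ℂ) * Complex.I) * B (Complex.exp ((s : ℂ) * Complex.I)) :=
    funext hbranch
  rw [hfun] at hL
  have heq := hL.unique hR
  rw [hbranch t] at heq
  rw [← hzdef] at heq
  -- solve the complex equation
  have h2 : z * B z * Complex.I * ((Complex.ofReal (deriv φ t)) - (1 + (r : ℂ))) = 0 := by
    linear_combination heq + (z * Complex.I) * hzD
  have h3 : ((Complex.ofReal (deriv φ t))) - (1 + (r : ℂ)) = 0 := by
    rcases mul_eq_zero.mp h2 with h | h
    · exact absurd h (mul_ne_zero (mul_ne_zero hz0 hBz0) Complex.I_ne_zero)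
    · exact h
  have h4 : (Complex.ofReal (deriv φ t)) = ((1 + r : ℝ) : ℂ) := by
    push_cast
    linear_combination h3
  have h5 : deriv φ t = 1 + r := by exact_mod_cast h4
  constructor
  · rw [hDB.deriv, hnD, h5]
  · rw [h5]; linarith
end

section
/- Let 0 ≤ t_1 < ⋯ < t_{n+1} < 2π, z_k = e^{it_k}, β_k ∈ ℝ with ∑ β_k = 1 and ∑ |β_k| ≤ 2, and let f satisfy f''/f' = -2 ∑_{k=1}^{n+1} β_k/(z - z_k) on the unit disk. Then for any 0 ≤ θ_1 < θ_2 < 2π and 0 < r < 1, ∫_{θ_1}^{θ_2} Re(1 + z f''(z)/f'(z)) dθ > -π, where z = r e^{iθ}. (This is the close-to-convexity integral condition.) -/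
open Complex Metric intervalIntegral

private lemma kernel_cont (w : ℂ) (hw : ‖w‖ = 1) {r : ℝ} (hr0 : 0 < r) (hr1 : r < 1) :
    Continuous (fun θ : ℝ => (w + r * Complex.exp (θ * Complex.I)) /
      (w - r * Complex.exp (θ * Complex.I))) := by
  have habsz : ∀ θ : ℝ, ‖(r : ℂ) * Complex.exp (θ * Complex.I)‖ = r := by
    intro θ
    rw [norm_mul, Complex.norm_exp_ofReal_mul_I, Complex.norm_real, Real.norm_eq_abs, abs_of_pos hr0, mul_one]
  have hc : Continuous (fun θ : ℝ => (r : ℂ) * Complex.exp (θ * Complex.I)) := by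
    exact continuous_const.mul (Complex.continuous_exp.comp (Complex.continuous_ofReal.mul
      continuous_const))
  refine (continuous_const.add hc).div (continuous_const.sub hc) ?_
  intro θ h
  rw [sub_eq_zero] at h
  have := habsz θ
  rw [← h, hw] at this
  linarith

private lemma poisson_integral (w : ℂ) (hw : ‖w‖ = 1) {r : ℝ} (hr0 : 0 < r)
    (hr1 : r < 1) :
    (∫ θ in (0:ℝ)..(2 * Real.pi),
      ((w + r * Complex.exp (θ * Complex.I)) / (w - r * Complex.exp (θ * Complex.I))).re)
      = 2 * Real.pi := by
  set g : ℂ → ℂ := fun z => (w + z) / (w - z) with hg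
  have hne : ∀ z : ℂ, ‖z‖ < 1 → w - z ≠ 0 := by
    intro z hz h
    rw [sub_eq_zero] at h
    rw [← h, hw] at hz
    linarith
  have hd : DifferentiableOn ℂ g (closedBall (0 : ℂ) r) := by
    intro z hz
    have hzr : ‖z‖ ≤ r := by
      simpa [Complex.dist_eq] using mem_closedBall.mp hz
    exact (((differentiableAt_const _).add differentiableAt_id).div
      ((differentiableAt_const _).sub differentiableAt_id)
      (hne z (lt_of_le_of_lt hzr hr1))).differentiableWithinAt
  have hc := hd.circleIntegral_sub_inv_smul (w := 0) (by simpa [mem_ball] using hr0)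
  have hg0 : g 0 = 1 := by
    have : w ≠ 0 := by
      intro h; rw [h] at hw; simp at hw
    simp [hg, div_self this]
  rw [hg0, smul_eq_mul, mul_one, circleIntegral] at hc
  simp only [deriv_circleMap, sub_zero, smul_eq_mul] at hc
  have hcne : ∀ θ : ℝ, circleMap 0 r θ ≠ 0 := fun θ => circleMap_ne_center (ne_of_gt hr0)
  have heq : ∀ θ ∈ Set.uIcc (0:ℝ) (2 * Real.pi),
      circleMap 0 r θ * Complex.I * ((circleMap 0 r θ)⁻¹ * g (circleMap 0 r θ))
        = Complex.I * g (circleMap 0 r θ) := by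
    intro θ _
    field_simp [hcne θ]
  rw [intervalIntegral.integral_congr heq, intervalIntegral.integral_const_mul] at hc
  have hS : (∫ θ in (0:ℝ)..(2 * Real.pi), g (circleMap 0 r θ)) = (2 * Real.pi : ℝ) := by
    apply mul_left_cancel₀ Complex.I_ne_zero
    rw [hc]
    push_cast
    ring
  have hcm : ∀ θ : ℝ, circleMap 0 r θ = (r : ℂ) * Complex.exp (θ * Complex.I) := by
    intro θ; simp [circleMap]
  simp only [hcm] at hS
  have hint : IntervalIntegrable (fun θ : ℝ => g ((r:ℂ) * Complex.exp (θ * Complex.I)))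
      MeasureTheory.volume 0 (2 * Real.pi) :=
    (kernel_cont w hw hr0 hr1).intervalIntegrable _ _
  have := Complex.reCLM.intervalIntegral_comp_comm hint
  rw [hS] at this
  simpa [hg] using this


private lemma kernel_pos (w : ℂ) (hw : ‖w‖ = 1) {r : ℝ} (hr0 : 0 < r) (hr1 : r < 1)
    (θ : ℝ) :
    0 < ((w + r * Complex.exp (θ * Complex.I)) / (w - r * Complex.exp (θ * Complex.I))).re := by
  set z : ℂ := (r : ℂ) * Complex.exp (θ * Complex.I) with hz
  have habsz : ‖z‖ = r := by
    rw [hz, norm_mul, Complex.norm_exp_ofReal_mul_I, Complex.norm_real, Real.norm_eq_abs, abs_of_pos hr0, mul_one]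
  have hne : w - z ≠ 0 := by
    intro h
    rw [sub_eq_zero] at h
    rw [← h, hw] at habsz
    linarith
  have hnum : (w + z).re * (w - z).re + (w + z).im * (w - z).im
      = Complex.normSq w - Complex.normSq z := by
    simp only [Complex.normSq_apply, Complex.add_re, Complex.sub_re, Complex.add_im,
      Complex.sub_im]
    ring
  have h1 : Complex.normSq w = 1 := by rw [Complex.normSq_eq_norm_sq, hw]; norm_num
  have h2 : Complex.normSq z = r ^ 2 := by rw [Complex.normSq_eq_norm_sq, habsz]
  rw [Complex.div_re, ← add_div, hnum, h1, h2]
  apply div_pos (by nlinarith) (Complex.normSq_pos.mpr hne)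

private lemma poisson_interval_bounds (w : ℂ) (hw : ‖w‖ = 1) {r θ₁ θ₂ : ℝ}
    (hr0 : 0 < r) (hr1 : r < 1) (hθ₁ : 0 ≤ θ₁) (hθ : θ₁ < θ₂) (hθ₂ : θ₂ < 2 * Real.pi) :
    0 < (∫ θ in θ₁..θ₂,
        ((w + r * Complex.exp (θ * Complex.I)) / (w - r * Complex.exp (θ * Complex.I))).re) ∧
    (∫ θ in θ₁..θ₂,
        ((w + r * Complex.exp (θ * Complex.I)) / (w - r * Complex.exp (θ * Complex.I))).re)
      < 2 * Real.pi := by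
  set P : ℝ → ℝ := fun θ =>
    ((w + r * Complex.exp (θ * Complex.I)) / (w - r * Complex.exp (θ * Complex.I))).re with hP
  have hcont : Continuous P := (Complex.continuous_re.comp (kernel_cont w hw hr0 hr1))
  have hint : ∀ a b : ℝ, IntervalIntegrable P MeasureTheory.volume a b := fun a b =>
    hcont.intervalIntegrable a b
  have hpos := kernel_pos w hw hr0 hr1
  constructor
  · exact intervalIntegral_pos_of_pos (hint θ₁ θ₂) hpos hθ
  · have hsplit : (∫ θ in (0:ℝ)..θ₁, P θ) + (∫ θ in θ₁..θ₂, P θ) + (∫ θ in θ₂..(2*Real.pi), P θ)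
        = 2 * Real.pi := by
      rw [integral_add_adjacent_intervals (hint 0 θ₁) (hint θ₁ θ₂),
        integral_add_adjacent_intervals (hint 0 θ₂) (hint θ₂ _)]
      exact poisson_integral w hw hr0 hr1
    have h1 : 0 ≤ ∫ θ in (0:ℝ)..θ₁, P θ :=
      intervalIntegral.integral_nonneg hθ₁ (fun x _ => (hpos x).le)
    have h2 : 0 < ∫ θ in θ₂..(2*Real.pi), P θ :=
      intervalIntegral_pos_of_pos (hint _ _) hpos hθ₂
    linarith

/-- The close-to-convexity integral condition: if `f` is analytic and locally injective on
the unit disk with `f''/f' = -2 ∑ βₖ/(z - zₖ)`, `zₖ = e^{itₖ}`, `∑ βₖ = 1`,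
`∑ |βₖ| ≤ 2`, then for `0 ≤ θ₁ < θ₂ < 2π` and `0 < r < 1`,
`∫_{θ₁}^{θ₂} Re(1 + z f''/f') dθ > -π` with `z = r e^{iθ}`. -/
theorem close_to_convex_integral (n : ℕ) (t : Fin (n + 1) → ℝ)
    (ht : StrictMono t) (ht0 : 0 ≤ t 0) (ht2π : ∀ k, t k < 2 * Real.pi)
    (β : Fin (n + 1) → ℝ) (hβsum : ∑ k, β k = 1) (hβabs : ∑ k, |β k| ≤ 2)
    (f : ℂ → ℂ) (hf : DifferentiableOn ℂ f (ball (0 : ℂ) 1))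
    (hf' : ∀ z ∈ ball (0 : ℂ) 1, deriv f z ≠ 0)
    (hps : ∀ z ∈ ball (0 : ℂ) 1,
      deriv (deriv f) z / deriv f z =
        -2 * ∑ k, (β k : ℂ) / (z - Complex.exp (t k * Complex.I)))
    (θ₁ θ₂ r : ℝ) (hθ₁ : 0 ≤ θ₁) (hθ : θ₁ < θ₂) (hθ₂ : θ₂ < 2 * Real.pi)
    (hr0 : 0 < r) (hr1 : r < 1) :
    (∫ θ in θ₁..θ₂,
        (1 + (r * Complex.exp (θ * Complex.I)) *
          deriv (deriv f) (r * Complex.exp (θ * Complex.I)) /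
            deriv f (r * Complex.exp (θ * Complex.I))).re) > -Real.pi := by
  have hπ := Real.pi_pos
  set w : Fin (n + 1) → ℂ := fun k => Complex.exp (t k * Complex.I) with hwdef
  have habsw : ∀ k, ‖w k‖ = 1 := fun k => Complex.norm_exp_ofReal_mul_I _
  set P : Fin (n + 1) → ℝ → ℝ := fun k θ =>
    ((w k + r * Complex.exp (θ * Complex.I)) /
      (w k - r * Complex.exp (θ * Complex.I))).re with hPdef
  -- pointwise identity
  have key : ∀ θ : ℝ,
      (1 + (r * Complex.exp (θ * Complex.I)) *
          deriv (deriv f) (r * Complex.exp (θ * Complex.I)) /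
            deriv f (r * Complex.exp (θ * Complex.I))).re = ∑ k, β k * P k θ := by
    intro θ
    set z : ℂ := (r : ℂ) * Complex.exp (θ * Complex.I) with hzdef
    have habsz : ‖z‖ = r := by
      rw [hzdef, norm_mul, Complex.norm_exp_ofReal_mul_I, Complex.norm_real, Real.norm_eq_abs,
        abs_of_pos hr0, mul_one]
    have hzball : z ∈ ball (0 : ℂ) 1 := by
      simp only [mem_ball, Complex.dist_eq, sub_zero, habsz]
      exact hr1
    have hzne : ∀ k, w k - z ≠ 0 := by
      intro k h
      rw [sub_eq_zero] at h
      rw [← h, habsw] at habsz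
      linarith
    have h1 : z * deriv (deriv f) z / deriv f z = z * (deriv (deriv f) z / deriv f z) :=
      mul_div_assoc _ _ _
    rw [h1, hps z hzball]
    have hterm : ∀ k, (β k : ℂ) * ((w k + z) / (w k - z))
        = (β k : ℂ) + z * (-2 * ((β k : ℂ) / (z - w k))) := by
      intro k
      have h2 : z - w k ≠ 0 := fun h => hzne k (by rw [← neg_sub] at h; simpa using neg_eq_zero.mp h)
      field_simp [hzne k, h2]
      ring
    have hsum : (∑ k, (β k : ℂ) * ((w k + z) / (w k - z)))
        = 1 + z * (-2 * ∑ k, (β k : ℂ) / (z - w k)) := by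
      rw [Finset.sum_congr rfl (fun k _ => hterm k), Finset.sum_add_distrib,
        ← Finset.mul_sum, ← Finset.mul_sum]
      congr 1
      rw [← Complex.ofReal_sum, hβsum, Complex.ofReal_one]
    rw [← hsum, Complex.re_sum]
    exact Finset.sum_congr rfl fun k _ => by rw [Complex.re_ofReal_mul]
  rw [intervalIntegral.integral_congr (fun θ _ => key θ)]
  have hPint : ∀ k, IntervalIntegrable (fun θ => β k * P k θ) MeasureTheory.volume θ₁ θ₂ := by
    intro k
    exact ((continuous_const.mul
      (Complex.continuous_re.comp (kernel_cont (w k) (habsw k) hr0 hr1))).intervalIntegrable _ _)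
  rw [intervalIntegral.integral_finset_sum (fun k _ => hPint k)]
  have hIconst : ∀ k, (∫ θ in θ₁..θ₂, β k * P k θ) = β k * ∫ θ in θ₁..θ₂, P k θ := fun k =>
    intervalIntegral.integral_const_mul _ _
  simp only [hIconst]
  -- set I k
  set I : Fin (n + 1) → ℝ := fun k => ∫ θ in θ₁..θ₂, P k θ with hIdef
  have hIbounds : ∀ k, 0 < I k ∧ I k < 2 * Real.pi := fun k =>
    poisson_interval_bounds (w k) (habsw k) hr0 hr1 hθ₁ hθ hθ₂
  -- arithmetic
  have hsplit : ∀ k, β k * I k = (β k + |β k|) / 2 * I k - (|β k| - β k) / 2 * I k := by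
    intro k; ring
  rw [Finset.sum_congr rfl (fun k _ => hsplit k), Finset.sum_sub_distrib]
  have hA : 0 < ∑ k, (β k + |β k|) / 2 * I k := by
    have hex : ∃ k, 0 < β k := by
      by_contra h
      push_neg at h
      have : (∑ k, β k) ≤ 0 := Finset.sum_nonpos fun k _ => h k
      linarith
    obtain ⟨k₀, hk₀⟩ := hex
    refine Finset.sum_pos' (fun k _ => ?_) ⟨k₀, Finset.mem_univ k₀, ?_⟩
    · have : 0 ≤ (β k + |β k|) / 2 := by
        have := neg_abs_le (β k); linarith
      exact mul_nonneg this (hIbounds k).1.le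
    · have h1 : 0 < (β k₀ + |β k₀|) / 2 := by
        have := abs_nonneg (β k₀); linarith
      exact mul_pos h1 (hIbounds k₀).1
  have hB : ∑ k, (|β k| - β k) / 2 * I k ≤ Real.pi := by
    have hle : ∀ k, (|β k| - β k) / 2 * I k ≤ (|β k| - β k) / 2 * (2 * Real.pi) := by
      intro k
      have hc : 0 ≤ (|β k| - β k) / 2 := by
        have := le_abs_self (β k); linarith
      exact mul_le_mul_of_nonneg_left (hIbounds k).2.le hc
    calc ∑ k, (|β k| - β k) / 2 * I k ≤ ∑ k, (|β k| - β k) / 2 * (2 * Real.pi) :=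
          Finset.sum_le_sum fun k _ => hle k
      _ = ∑ k, (|β k| - β k) * Real.pi := Finset.sum_congr rfl fun k _ => by ring
      _ = ((∑ k, |β k|) - ∑ k, β k) * Real.pi := by
          rw [← Finset.sum_mul, Finset.sum_sub_distrib]
      _ ≤ Real.pi := by
          rw [hβsum]
          nlinarith
  linarith
end

section
/- Fix 0 < θ < π and 0 ≤ ρ ≤ r < 1. Among all arcs of angular length 2θ on the unit circle and points a with |a| = ρ ≤ r, the integral ∫_arc (1 - |a|²)/|e^{it} - a|² dt is maximized when |a| = r and a/|a| is the midpoint of the arc; hence ∫_{α}^{α+2θ} (1 - |a|²)/|e^{it} - a|² dt ≤ 4·arctan(((1 + r)/(1 - r))·tan(θ/2)) for every a with |a| ≤ r. -/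
open Complex

private lemma denomPos {ρ : ℝ} (h0 : 0 ≤ ρ) (h1 : ρ < 1) (u : ℝ) :
    0 < 1 + ρ ^ 2 - 2 * ρ * Real.cos u := by
  nlinarith [Real.cos_le_one u, sq_nonneg (1 - ρ)]

private lemma hasDerivF {ρ : ℝ} (h0 : 0 ≤ ρ) (h1 : ρ < 1) {u : ℝ}
    (hu1 : -Real.pi < u) (hu2 : u < Real.pi) :
    HasDerivAt (fun x => 2 * Real.arctan ((1 + ρ) / (1 - ρ) * Real.tan (x / 2)))
      ((1 - ρ ^ 2) / (1 + ρ ^ 2 - 2 * ρ * Real.cos u)) u := by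
  have hρ1 : (0:ℝ) < 1 - ρ := by linarith
  have hc : Real.cos (u / 2) > 0 :=
    Real.cos_pos_of_mem_Ioo ⟨by linarith, by linarith⟩
  have h2 : HasDerivAt (fun x : ℝ => x / 2) (1 / 2) u := by
    simpa using (hasDerivAt_id u).div_const 2
  have h3 := (Real.hasDerivAt_tan hc.ne').comp u h2
  have h4 := h3.const_mul ((1 + ρ) / (1 - ρ))
  have h5 := (Real.hasDerivAt_arctan ((1 + ρ) / (1 - ρ) * Real.tan (u / 2))).comp u h4
  have h6 := h5.const_mul 2
  refine HasDerivAt.congr_deriv h6 ?_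
  have ht : Real.tan (u / 2) = Real.sin (u / 2) / Real.cos (u / 2) := Real.tan_eq_sin_div_cos _
  have hcs : Real.cos (u / 2) ^ 2 = 1 / 2 + Real.cos u / 2 := by
    have := Real.cos_sq (u / 2); rw [this]; ring_nf
  have hss : Real.sin (u / 2) ^ 2 = 1 / 2 - Real.cos u / 2 := by
    have := Real.sin_sq_add_cos_sq (u / 2); linarith
  have hD := denomPos h0 h1 u
  have hc2 : (0:ℝ) < 1 + Real.cos u := by nlinarith [hcs, hc]
  have e1 : Real.tan (u / 2) ^ 2 = (1 - Real.cos u) / (1 + Real.cos u) := by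
    rw [Real.tan_eq_sin_div_cos, div_pow, hss, hcs]
    field_simp
  have e2 : 1 + ((1 + ρ) / (1 - ρ) * Real.tan (u / 2)) ^ 2
      = 2 * (1 + ρ ^ 2 - 2 * ρ * Real.cos u) / ((1 - ρ) ^ 2 * (1 + Real.cos u)) := by
    rw [mul_pow, e1]
    field_simp
    ring
  have e3 : (1:ℝ) / Real.cos (u / 2) ^ 2 = 2 / (1 + Real.cos u) := by
    rw [hcs]; field_simp
  rw [e2, e3]
  field_simp
  ring

private lemma pcont {ρ : ℝ} (h0 : 0 ≤ ρ) (h1 : ρ < 1) :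
    Continuous (fun u : ℝ => (1 - ρ ^ 2) / (1 + ρ ^ 2 - 2 * ρ * Real.cos u)) :=
  continuous_const.div (by continuity) fun u => (denomPos h0 h1 u).ne'

private lemma pint {ρ : ℝ} (h0 : 0 ≤ ρ) (h1 : ρ < 1) (a b : ℝ) :
    IntervalIntegrable (fun u : ℝ => (1 - ρ ^ 2) / (1 + ρ ^ 2 - 2 * ρ * Real.cos u))
      MeasureTheory.volume a b :=
  (pcont h0 h1).intervalIntegrable a b

private lemma ple {ρ : ℝ} (h0 : 0 ≤ ρ) (h1 : ρ < 1) {v w : ℝ} (h : Real.cos v ≤ Real.cos w) :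
    (1 - ρ ^ 2) / (1 + ρ ^ 2 - 2 * ρ * Real.cos v)
      ≤ (1 - ρ ^ 2) / (1 + ρ ^ 2 - 2 * ρ * Real.cos w) := by
  apply div_le_div_of_nonneg_left (by nlinarith) (denomPos h0 h1 w)
  nlinarith

/-- Central interval computation. -/
private lemma central_eq {ρ θ : ℝ} (h0 : 0 ≤ ρ) (h1 : ρ < 1) (hθ0 : 0 < θ)
    (hθπ : θ < Real.pi) :
    ∫ u in (-θ)..θ, (1 - ρ ^ 2) / (1 + ρ ^ 2 - 2 * ρ * Real.cos u)
      = 4 * Real.arctan ((1 + ρ) / (1 - ρ) * Real.tan (θ / 2)) := by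
  rw [intervalIntegral.integral_eq_sub_of_hasDerivAt
      (f := fun x => 2 * Real.arctan ((1 + ρ) / (1 - ρ) * Real.tan (x / 2)))
      (fun u hu => by
        rw [Set.uIcc_of_le (by linarith : -θ ≤ θ)] at hu
        exact hasDerivF h0 h1 (by linarith [hu.1]) (by linarith [hu.2]))
      (pint h0 h1 _ _)]
  rw [show -θ / 2 = -(θ / 2) by ring, Real.tan_neg, mul_neg, Real.arctan_neg]
  ring

/-- Centered interval maximizes. -/
private lemma shift_le {ρ θ β : ℝ} (h0 : 0 ≤ ρ) (h1 : ρ < 1) (hθ0 : 0 < θ)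
    (hθπ : θ < Real.pi) (hβ0 : 0 ≤ β) (hβπ : β ≤ Real.pi) :
    ∫ u in (β - θ)..(β + θ), (1 - ρ ^ 2) / (1 + ρ ^ 2 - 2 * ρ * Real.cos u)
      ≤ ∫ u in (-θ)..θ, (1 - ρ ^ 2) / (1 + ρ ^ 2 - 2 * ρ * Real.cos u) := by
  set P : ℝ → ℝ := fun u => (1 - ρ ^ 2) / (1 + ρ ^ 2 - 2 * ρ * Real.cos u) with hP
  have hI : ∀ a b : ℝ, IntervalIntegrable P MeasureTheory.volume a b := pint h0 h1
  have A := intervalIntegral.integral_add_adjacent_intervals (μ := MeasureTheory.volume)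
    (hI (-θ) (β - θ)) (hI (β - θ) (β + θ))
  have B := intervalIntegral.integral_add_adjacent_intervals (μ := MeasureTheory.volume)
    (hI (-θ) θ) (hI θ (β + θ))
  have key : (∫ u in θ..(β + θ), P u) ≤ ∫ u in (-θ)..(β - θ), P u := by
    have e1 : (∫ s in (0:ℝ)..β, P (s + θ)) = ∫ u in θ..(β + θ), P u := by
      rw [intervalIntegral.integral_comp_add_right P θ]
      norm_num
    have e2 : (∫ s in (0:ℝ)..β, P (s - θ)) = ∫ u in (-θ)..(β - θ), P u := by
      rw [intervalIntegral.integral_comp_sub_right P θ]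
      norm_num
    rw [← e1, ← e2]
    apply intervalIntegral.integral_mono_on hβ0
    · exact ((pcont h0 h1).comp (by continuity)).intervalIntegrable _ _
    · exact ((pcont h0 h1).comp (by continuity)).intervalIntegrable _ _
    · intro s hs
      apply ple h0 h1
      have hsin : Real.cos (s + θ) - Real.cos (s - θ) = -2 * Real.sin s * Real.sin θ := by
        rw [Real.cos_sub_cos]
        ring_nf
      have h1s : 0 ≤ Real.sin s :=
        Real.sin_nonneg_of_nonneg_of_le_pi hs.1 (le_trans hs.2 hβπ)
      have h2s : 0 ≤ Real.sin θ := Real.sin_nonneg_of_nonneg_of_le_pi hθ0.le hθπ.le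
      nlinarith
  linarith

private lemma norm_sq_sub (a : ℂ) (t : ℝ) :
    ‖Complex.exp (↑t * Complex.I) - a‖ ^ 2
      = 1 + ‖a‖ ^ 2 - 2 * ‖a‖ * Real.cos (t - Complex.arg a) := by
  have factored : Complex.exp (↑t * I) - a
      = Complex.exp (↑(Complex.arg a) * I) * (Complex.exp (↑(t - Complex.arg a) * I)
          - (‖a‖ : ℂ)) := by
    rw [mul_sub, ← Complex.exp_add, mul_comm (Complex.exp _) (‖a‖ : ℂ),
      Complex.norm_mul_exp_arg_mul_I]
    congr 2
    push_cast
    ring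
  rw [factored, norm_mul, Complex.norm_exp_ofReal_mul_I,
    one_mul, Complex.sq_norm, Complex.normSq_apply]
  simp only [Complex.sub_re, Complex.sub_im, Complex.exp_ofReal_mul_I_re,
    Complex.exp_ofReal_mul_I_im, Complex.ofReal_re, Complex.ofReal_im,
    Complex.norm_real]
  have := Real.sin_sq_add_cos_sq (t - Complex.arg a)
  nlinarith [this]

/-- Sharp upper bound for the Poisson kernel integral over an arc: for `0 < θ < π`,
`0 ≤ r < 1` and any `a` with `|a| ≤ r`, and any arc of angular length `2θ`,
`∫_{α}^{α+2θ} (1 - |a|²)/|e^{it} - a|² dt ≤ 4 arctan(((1+r)/(1-r)) tan(θ/2))`. -/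
theorem poisson_arc_integral_le (θ r : ℝ) (hθ0 : 0 < θ) (hθπ : θ < Real.pi)
    (hr0 : 0 ≤ r) (hr1 : r < 1) (a : ℂ) (ha : ‖a‖ ≤ r) (α : ℝ) :
    (∫ t in α..(α + 2 * θ),
        (1 - ‖a‖ ^ 2) / ‖Complex.exp (t * Complex.I) - a‖ ^ 2)
      ≤ 4 * Real.arctan ((1 + r) / (1 - r) * Real.tan (θ / 2)) := by
  have hρ0 : 0 ≤ ‖a‖ := norm_nonneg a
  have hρ1 : ‖a‖ < 1 := lt_of_le_of_lt ha hr1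
  set ρ := ‖a‖ with hρ
  set φ := Complex.arg a with hφ
  set P : ℝ → ℝ := fun u => (1 - ρ ^ 2) / (1 + ρ ^ 2 - 2 * ρ * Real.cos u) with hPdef
  set c := α - φ with hc
  have step1 : (∫ t in α..(α + 2 * θ),
        (1 - ‖a‖ ^ 2) / ‖Complex.exp (t * Complex.I) - a‖ ^ 2)
      = ∫ u in c..(c + 2 * θ), P u := by
    have hpt : ∀ t : ℝ, (1 - ‖a‖ ^ 2) / ‖Complex.exp (t * Complex.I) - a‖ ^ 2
        = P (t - φ) := by
      intro t
      rw [norm_sq_sub a t]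
    calc (∫ t in α..(α + 2 * θ),
            (1 - ‖a‖ ^ 2) / ‖Complex.exp (t * Complex.I) - a‖ ^ 2)
        = ∫ t in α..(α + 2 * θ), P (t - φ) := by simp only [hpt]
      _ = ∫ u in (α - φ)..(α + 2 * θ - φ), P u :=
          intervalIntegral.integral_comp_sub_right P φ
      _ = ∫ u in c..(c + 2 * θ), P u := by rw [hc]; congr 1; ring
  set n := toIocDiv Real.two_pi_pos (-Real.pi) (c + θ) with hn
  set β := toIocMod Real.two_pi_pos (-Real.pi) (c + θ) with hβ
  have hβmem : β ∈ Set.Ioc (-Real.pi) (-Real.pi + 2 * Real.pi) :=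
    toIocMod_mem_Ioc _ _ _
  have hβeq : β = c + θ - (n : ℝ) * (2 * Real.pi) := by
    rw [hβ, toIocMod, hn, zsmul_eq_mul]
  have hβ2 : β ≤ Real.pi := by have := hβmem.2; linarith
  have hβ1 : -Real.pi < β := hβmem.1
  have step2 : (∫ u in c..(c + 2 * θ), P u) = ∫ u in (β - θ)..(β + θ), P u := by
    have hper : ∀ x : ℝ, P (x + (n : ℝ) * (2 * Real.pi)) = P x := by
      intro x
      simp only [hPdef]
      rw [Real.cos_add_int_mul_two_pi]
    calc (∫ u in c..(c + 2 * θ), P u)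
        = ∫ u in (β - θ + (n : ℝ) * (2 * Real.pi))..(β + θ + (n : ℝ) * (2 * Real.pi)), P u := by
          congr 1 <;> (rw [hβeq]; ring)
      _ = ∫ x in (β - θ)..(β + θ), P (x + (n : ℝ) * (2 * Real.pi)) :=
          (intervalIntegral.integral_comp_add_right P _).symm
      _ = ∫ u in (β - θ)..(β + θ), P u := by simp only [hper]
  have even_refl : ∀ γ : ℝ, (∫ u in (γ - θ)..(γ + θ), P u)
      = ∫ u in ((-γ) - θ)..((-γ) + θ), P u := by
    intro γ
    have hev : ∀ x : ℝ, P (-x) = P x := by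
      intro x; simp only [hPdef, Real.cos_neg]
    have h := intervalIntegral.integral_comp_neg (a := (-γ) - θ) (b := (-γ) + θ) P
    simp only [hev] at h
    rw [show -((-γ) + θ) = γ - θ by ring, show -((-γ) - θ) = γ + θ by ring] at h
    exact h.symm
  obtain ⟨β', hβ'0, hβ'π, hβ'eq⟩ : ∃ β', 0 ≤ β' ∧ β' ≤ Real.pi ∧
      (∫ u in (β - θ)..(β + θ), P u) = ∫ u in (β' - θ)..(β' + θ), P u := by
    rcases le_or_gt 0 β with h | h
    · exact ⟨β, h, hβ2, rfl⟩
    · exact ⟨-β, by linarith, by linarith, even_refl β⟩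
  have step3 : (∫ u in (β' - θ)..(β' + θ), P u) ≤ ∫ u in (-θ)..θ, P u :=
    shift_le hρ0 hρ1 hθ0 hθπ hβ'0 hβ'π
  have step4 : (∫ u in (-θ)..θ, P u)
      = 4 * Real.arctan ((1 + ρ) / (1 - ρ) * Real.tan (θ / 2)) :=
    central_eq hρ0 hρ1 hθ0 hθπ
  have hT : 0 < Real.tan (θ / 2) :=
    Real.tan_pos_of_pos_of_lt_pi_div_two (by linarith) (by linarith)
  have hK : (1 + ρ) / (1 - ρ) ≤ (1 + r) / (1 - r) := by
    rw [div_le_div_iff₀ (by linarith) (by linarith)]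
    nlinarith
  have step5 : Real.arctan ((1 + ρ) / (1 - ρ) * Real.tan (θ / 2))
      ≤ Real.arctan ((1 + r) / (1 - r) * Real.tan (θ / 2)) :=
    Real.arctan_strictMono.monotone (mul_le_mul_of_nonneg_right hK hT.le)
  rw [step1, step2, hβ'eq]
  calc (∫ u in (β' - θ)..(β' + θ), P u) ≤ ∫ u in (-θ)..θ, P u := step3
    _ = 4 * Real.arctan ((1 + ρ) / (1 - ρ) * Real.tan (θ / 2)) := step4
    _ ≤ 4 * Real.arctan ((1 + r) / (1 - r) * Real.tan (θ / 2)) := by linarith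
end

section
/- Fix 0 < θ < π and 0 ≤ r < 1. For every a with |a| ≤ r and every arc of angular length 2θ, ∫ over the arc of (1 - |a|²)/|e^{it} - a|² dt ≥ 4·arctan(((1 - r)/(1 + r))·tan(θ/2)). -/
open Complex

section PoissonAuxSection
open Real

namespace PoissonAux

noncomputable def pf (s u : ℝ) : ℝ := s * Real.sin u / (1 - s * Real.cos u)
noncomputable def pA (s u : ℝ) : ℝ := Real.arctan (pf s u)
noncomputable def pg (s u : ℝ) : ℝ := (1 - s ^ 2) / (1 + s ^ 2 - 2 * s * Real.cos u)
noncomputable def pd (s u : ℝ) : ℝ := (s * Real.cos u - s ^ 2) / (1 + s ^ 2 - 2 * s * Real.cos u)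

lemma denom1_pos {s : ℝ} (hs0 : 0 ≤ s) (hs1 : s < 1) (u : ℝ) : 0 < 1 - s * Real.cos u := by
  have h1 : s * Real.cos u ≤ s * 1 := by
    rcases eq_or_lt_of_le hs0 with h | h
    · simp [← h]
    · exact mul_le_mul_of_nonneg_left (Real.cos_le_one u) hs0
  linarith

lemma denom2_pos {s : ℝ} (hs0 : 0 ≤ s) (hs1 : s < 1) (u : ℝ) :
    0 < 1 + s ^ 2 - 2 * s * Real.cos u := by
  have h1 : 2 * s * Real.cos u ≤ 2 * s * 1 :=
    mul_le_mul_of_nonneg_left (Real.cos_le_one u) (by linarith)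
  nlinarith

lemma hasDerivAt_pA {s : ℝ} (hs0 : 0 ≤ s) (hs1 : s < 1) (u : ℝ) :
    HasDerivAt (pA s) (pd s u) u := by
  have hden := denom1_pos hs0 hs1 u
  have hden2 := denom2_pos hs0 hs1 u
  have hnum : HasDerivAt (fun u => s * Real.sin u) (s * Real.cos u) u :=
    (Real.hasDerivAt_sin u).const_mul s
  have hden' : HasDerivAt (fun u => 1 - s * Real.cos u) (s * Real.sin u) u := by
    simpa using (((Real.hasDerivAt_cos u).const_mul s).const_sub 1)
  have hf : HasDerivAt (pf s)
      ((s * Real.cos u * (1 - s * Real.cos u) - s * Real.sin u * (s * Real.sin u)) /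
        (1 - s * Real.cos u) ^ 2) u := hnum.div hden' hden.ne'
  have := hf.arctan
  convert this using 1
  · rfl
  unfold pd pf
  have hsin := Real.sin_sq_add_cos_sq u
  have hden2' : 1 + s ^ 2 - s * Real.cos u * 2 ≠ 0 := by linarith
  field_simp
  linear_combination (s^2*(1-s*Real.cos u)^2*((s*Real.cos u - s^2)+(1+s^2-2*s*Real.cos u)) + (2*s^3*Real.cos u - 3*s^4*Real.cos u^2 + s^5*Real.cos u^3)) * hsin


lemma continuous_pg {s : ℝ} (hs0 : 0 ≤ s) (hs1 : s < 1) : Continuous (pg s) := by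
  apply Continuous.div continuous_const
  · fun_prop
  · intro u; exact (denom2_pos hs0 hs1 u).ne'

lemma hasDerivAt_pG {s : ℝ} (hs0 : 0 ≤ s) (hs1 : s < 1) (u : ℝ) :
    HasDerivAt (fun u => u + 2 * pA s u) (pg s u) u := by
  have h := ((hasDerivAt_pA hs0 hs1 u).const_mul 2).const_add u
  have := (hasDerivAt_id u).add ((hasDerivAt_pA hs0 hs1 u).const_mul 2)
  refine HasDerivAt.congr_deriv this ?_
  have hden2 := denom2_pos hs0 hs1 u
  unfold pg pd
  field_simp
  ring

lemma integral_pg {s : ℝ} (hs0 : 0 ≤ s) (hs1 : s < 1) (x y : ℝ) :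
    ∫ t in x..y, pg s t = (y + 2 * pA s y) - (x + 2 * pA s x) := by
  refine intervalIntegral.integral_eq_sub_of_hasDerivAt
    (fun t _ => hasDerivAt_pG hs0 hs1 t) ?_
  exact (continuous_pg hs0 hs1).intervalIntegrable x y


noncomputable def pH (s θ c : ℝ) : ℝ := pA s (c + θ) - pA s (c - θ)

lemma pA_periodic (s : ℝ) : Function.Periodic (pA s) (2 * Real.pi) := by
  intro u
  unfold pA pf
  rw [Real.sin_add_two_pi, Real.cos_add_two_pi]

lemma pH_periodic (s θ : ℝ) : Function.Periodic (pH s θ) (2 * Real.pi) := by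
  intro c
  unfold pH
  rw [show c + 2 * Real.pi + θ = (c + θ) + 2 * Real.pi by ring,
    show c + 2 * Real.pi - θ = (c - θ) + 2 * Real.pi by ring,
    pA_periodic, pA_periodic]

lemma pA_neg (s u : ℝ) : pA s (-u) = -pA s u := by
  unfold pA pf
  rw [Real.sin_neg, Real.cos_neg, ← Real.arctan_neg]
  ring_nf

lemma pH_even (s θ c : ℝ) : pH s θ (-c) = pH s θ c := by
  unfold pH
  rw [show -c + θ = -(c - θ) by ring, show -c - θ = -(c + θ) by ring, pA_neg, pA_neg]
  ring

lemma pH_antitoneOn {s θ : ℝ} (hs0 : 0 ≤ s) (hs1 : s < 1) (hθ0 : 0 < θ)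
    (hθπ : θ < Real.pi) : AntitoneOn (pH s θ) (Set.Icc 0 Real.pi) := by
  have hderiv : ∀ c : ℝ, HasDerivAt (pH s θ) (pd s (c + θ) - pd s (c - θ)) c := by
    intro c
    have h1 : HasDerivAt (fun x : ℝ => pA s (x + θ)) (pd s (c + θ)) c := by
      simpa [Function.comp_def] using (hasDerivAt_pA hs0 hs1 (c + θ)).comp c ((hasDerivAt_id c).add_const θ)
    have h2 : HasDerivAt (fun x : ℝ => pA s (x - θ)) (pd s (c - θ)) c := by
      simpa [Function.comp_def] using (hasDerivAt_pA hs0 hs1 (c - θ)).comp c ((hasDerivAt_id c).sub_const θ)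
    exact h1.sub h2
  apply antitoneOn_of_deriv_nonpos (convex_Icc 0 Real.pi)
  · have hpf : Continuous (pf s) := by
      apply Continuous.div (by fun_prop) (by fun_prop)
      exact fun u => (denom1_pos hs0 hs1 u).ne'
    have hpA : Continuous (pA s) := Real.continuous_arctan.comp hpf
    exact ((hpA.comp (continuous_id.add continuous_const)).sub
      (hpA.comp (continuous_id.sub continuous_const))).continuousOn
  · intro c hc
    exact (hderiv c).differentiableAt.differentiableWithinAt
  · intro c hc
    rw [interior_Icc] at hc
    rw [(hderiv c).deriv]
    have hcm : Real.cos (c + θ) ≤ Real.cos (c - θ) := by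
      have : Real.cos (c - θ) - Real.cos (c + θ) = 2 * Real.sin c * Real.sin θ := by
        rw [Real.cos_sub, Real.cos_add]; ring
      have hsc : 0 ≤ Real.sin c := Real.sin_nonneg_of_nonneg_of_le_pi hc.1.le hc.2.le
      have hst : 0 ≤ Real.sin θ := Real.sin_nonneg_of_nonneg_of_le_pi hθ0.le hθπ.le
      nlinarith
    have hd1 := denom2_pos hs0 hs1 (c + θ)
    have hd2 := denom2_pos hs0 hs1 (c - θ)
    unfold pd
    rw [sub_nonpos, div_le_div_iff₀ hd1 hd2]
    have h1s : (0:ℝ) ≤ 1 - s ^ 2 := by nlinarith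
    nlinarith [mul_nonneg (mul_nonneg hs0 (sub_nonneg.mpr hcm)) h1s]


lemma pH_min {s θ : ℝ} (hs0 : 0 ≤ s) (hs1 : s < 1) (hθ0 : 0 < θ)
    (hθπ : θ < Real.pi) (c : ℝ) : pH s θ Real.pi ≤ pH s θ c := by
  have hπ := Real.pi_pos
  set n : ℤ := round (c / (2 * Real.pi)) with hn
  set c' : ℝ := c - n * (2 * Real.pi) with hc'
  have hper : pH s θ c' = pH s θ c := (pH_periodic s θ).sub_int_mul_eq n
  have habs : |c'| ≤ Real.pi := by
    have h1 : |c / (2 * Real.pi) - n| ≤ 1 / 2 := abs_sub_round _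
    have h2 : c' = 2 * Real.pi * (c / (2 * Real.pi) - n) := by
      field_simp [hc']; ring
    rw [h2, abs_mul, abs_of_pos (by positivity : (0:ℝ) < 2 * Real.pi)]
    nlinarith
  have heq : pH s θ |c'| = pH s θ c' := by
    rcases abs_cases c' with ⟨h, _⟩ | ⟨h, _⟩
    · rw [h]
    · rw [h, pH_even]
  have hmono := pH_antitoneOn hs0 hs1 hθ0 hθπ
    (Set.mem_Icc.mpr ⟨abs_nonneg _, habs⟩)
    (Set.mem_Icc.mpr ⟨Real.pi_pos.le, le_refl _⟩) habs
  rw [← hper, ← heq]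
  exact hmono

lemma pH_pi {s θ : ℝ} :
    pH s θ Real.pi = -2 * Real.arctan (s * Real.sin θ / (1 + s * Real.cos θ)) := by
  unfold pH pA pf
  rw [show Real.pi + θ = θ + Real.pi by ring, Real.sin_add_pi, Real.cos_add_pi,
    Real.sin_pi_sub, Real.cos_pi_sub]
  rw [show s * -Real.sin θ / (1 - s * -Real.cos θ) =
    -(s * Real.sin θ / (1 + s * Real.cos θ)) by ring_nf,
    Real.arctan_neg,
    show s * Real.sin θ / (1 - s * -Real.cos θ) =
    s * Real.sin θ / (1 + s * Real.cos θ) by ring_nf]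
  ring


lemma key_identity {s θ : ℝ} (hs0 : 0 ≤ s) (hs1 : s < 1) (hθ0 : 0 < θ)
    (hθπ : θ < Real.pi) :
    2 * θ - 4 * Real.arctan (s * Real.sin θ / (1 + s * Real.cos θ))
      = 4 * Real.arctan ((1 - s) / (1 + s) * Real.tan (θ / 2)) := by
  have hπ := Real.pi_pos
  have hco : 0 < Real.cos (θ / 2) :=
    Real.cos_pos_of_mem_Ioo ⟨by linarith, by linarith⟩
  have hsi : 0 < Real.sin (θ / 2) := Real.sin_pos_of_pos_of_lt_pi (by linarith) (by linarith)
  have hden : 0 < 1 + s * Real.cos θ := by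
    have h1 : s * Real.cos θ ≤ s * 1 := mul_le_mul_of_nonneg_left (Real.cos_le_one θ) hs0
    have h2 : s * (-1) ≤ s * Real.cos θ := mul_le_mul_of_nonneg_left (Real.neg_one_le_cos θ) hs0
    nlinarith
  have hB : 0 ≤ s * Real.sin θ / (1 + s * Real.cos θ) := by
    have : 0 ≤ Real.sin θ := Real.sin_nonneg_of_nonneg_of_le_pi hθ0.le hθπ.le
    positivity
  have ht : 0 < Real.tan (θ / 2) := Real.tan_pos_of_pos_of_lt_pi_div_two (by linarith) (by linarith)
  set B := s * Real.sin θ / (1 + s * Real.cos θ) with hBdef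
  have hxy : Real.tan (θ / 2) * (-B) < 1 := by nlinarith
  have hadd := Real.arctan_add hxy
  rw [Real.arctan_neg, Real.arctan_tan (by linarith) (by linarith)] at hadd
  have hsinθ : Real.sin θ = 2 * Real.sin (θ / 2) * Real.cos (θ / 2) := by
    rw [show θ = 2 * (θ / 2) by ring, Real.sin_two_mul]
    ring_nf
  have hcosθ : Real.cos θ = 2 * Real.cos (θ / 2) ^ 2 - 1 := by
    rw [show θ = 2 * (θ / 2) by ring, Real.cos_two_mul]
    ring_nf
  have hpy := Real.sin_sq_add_cos_sq (θ / 2)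
  have harg : (Real.tan (θ / 2) + -B) / (1 - Real.tan (θ / 2) * -B)
      = (1 - s) / (1 + s) * Real.tan (θ / 2) := by
    rw [hBdef, Real.tan_eq_sin_div_cos, hsinθ, hcosθ]
    have h1 : (0:ℝ) < 1 + s * (2 * Real.cos (θ / 2) ^ 2 - 1) := by
      rw [hcosθ] at hden; exact hden
    have h2 : 1 + s * (2 * Real.cos (θ / 2) ^ 2 - 1) - -(2 * Real.sin (θ / 2) ^ 2 * s) ≠ 0 := by
      nlinarith [sq_nonneg (Real.sin (θ / 2))]
    field_simp
    linear_combination (-2*s*(1-s)) * hpy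
  rw [harg] at hadd
  linarith


lemma real_main {s θ : ℝ} (hs0 : 0 ≤ s) (hs1 : s < 1) (hθ0 : 0 < θ)
    (hθπ : θ < Real.pi) (β : ℝ) :
    4 * Real.arctan ((1 - s) / (1 + s) * Real.tan (θ / 2))
      ≤ ∫ t in β..(β + 2 * θ), pg s t := by
  rw [integral_pg hs0 hs1]
  have hH : pA s (β + 2 * θ) - pA s β = pH s θ (β + θ) := by
    unfold pH
    rw [show β + θ + θ = β + 2 * θ by ring, show β + θ - θ = β by ring]
  have hmin := pH_min hs0 hs1 hθ0 hθπ (β + θ)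
  rw [pH_pi] at hmin
  have hkey := key_identity hs0 hs1 hθ0 hθπ
  have : (β + 2 * θ + 2 * pA s (β + 2 * θ)) - (β + 2 * pA s β)
      = 2 * θ + 2 * pH s θ (β + θ) := by rw [← hH]; ring
  rw [this]
  linarith

lemma rhs_mono {s r θ : ℝ} (hs0 : 0 ≤ s) (hsr : s ≤ r) (hθ0 : 0 < θ)
    (hθπ : θ < Real.pi) :
    Real.arctan ((1 - r) / (1 + r) * Real.tan (θ / 2))
      ≤ Real.arctan ((1 - s) / (1 + s) * Real.tan (θ / 2)) := by
  have hπ := Real.pi_pos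
  have ht : 0 ≤ Real.tan (θ / 2) :=
    Real.tan_nonneg_of_nonneg_of_le_pi_div_two (by linarith) (by linarith)
  apply Real.arctan_strictMono.monotone
  apply mul_le_mul_of_nonneg_right _ ht
  rw [div_le_div_iff₀ (by linarith) (by linarith)]
  nlinarith

end PoissonAux

open PoissonAux in
theorem poisson_arc_integral_ge' (θ r : ℝ) (hθ0 : 0 < θ) (hθπ : θ < Real.pi)
    (hr0 : 0 ≤ r) (hr1 : r < 1) (a : ℂ) (ha : ‖a‖ ≤ r) (α : ℝ) :
    (∫ t in α..(α + 2 * θ),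
        (1 - ‖a‖ ^ 2) / ‖Complex.exp (t * Complex.I) - a‖ ^ 2)
      ≥ 4 * Real.arctan ((1 - r) / (1 + r) * Real.tan (θ / 2)) := by
  set s := ‖a‖ with hs
  have hs0 : 0 ≤ s := norm_nonneg a
  have hs1 : s < 1 := lt_of_le_of_lt ha hr1
  have hnorm : ∀ t : ℝ, ‖Complex.exp (t * Complex.I) - a‖ ^ 2
      = 1 + s ^ 2 - 2 * s * Real.cos (t - a.arg) := by
    intro t
    rw [Complex.sq_norm, Complex.normSq_sub]
    have h1 : Complex.normSq (Complex.exp (t * Complex.I)) = 1 := by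
      rw [← Complex.sq_norm, Complex.norm_exp_ofReal_mul_I]; norm_num
    have h2 : Complex.normSq a = s ^ 2 := by rw [← Complex.sq_norm, hs]
    have h3 : (Complex.exp (t * Complex.I) * (starRingEnd ℂ) a).re
        = s * Real.cos (t - a.arg) := by
      have hre : (Complex.exp (t * Complex.I)).re = Real.cos t := by
        rw [Complex.exp_ofReal_mul_I_re]
      have him : (Complex.exp (t * Complex.I)).im = Real.sin t := by
        rw [Complex.exp_ofReal_mul_I_im]
      rw [Complex.mul_re, Complex.conj_re, Complex.conj_im, hre, him]
      have h4 : a.re = s * Real.cos a.arg := by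
        rw [hs, Complex.norm_mul_cos_arg]
      have h5 : a.im = s * Real.sin a.arg := by
        rw [hs, Complex.norm_mul_sin_arg]
      rw [h4, h5, Real.cos_sub]; ring
    rw [h1, h2, h3]; ring
  have hinteg : (∫ t in α..(α + 2 * θ),
        (1 - s ^ 2) / ‖Complex.exp (t * Complex.I) - a‖ ^ 2)
      = ∫ t in (α - a.arg)..(α - a.arg + 2 * θ), pg s t := by
    rw [show α - a.arg + 2 * θ = (α + 2 * θ) - a.arg by ring,
      ← intervalIntegral.integral_comp_sub_right (pg s) a.arg]
    apply intervalIntegral.integral_congr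
    intro t _
    show (1 - s ^ 2) / ‖Complex.exp (t * Complex.I) - a‖ ^ 2 = pg s (t - a.arg)
    rw [hnorm t]
    rfl
  rw [hinteg]
  exact le_trans (by linarith [rhs_mono hs0 ha hθ0 hθπ])
    (real_main hs0 hs1 hθ0 hθπ (α - a.arg))


/-- Sharp lower bound for the Poisson kernel integral over an arc: for `0 < θ < π`,
`0 ≤ r < 1` and any `a` with `|a| ≤ r`, and any arc of angular length `2θ`,
`∫_{α}^{α+2θ} (1 - |a|²)/|e^{it} - a|² dt ≥ 4 arctan(((1-r)/(1+r)) tan(θ/2))`. -/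
theorem poisson_arc_integral_ge (θ r : ℝ) (hθ0 : 0 < θ) (hθπ : θ < Real.pi)
    (hr0 : 0 ≤ r) (hr1 : r < 1) (a : ℂ) (ha : ‖a‖ ≤ r) (α : ℝ) :
    (∫ t in α..(α + 2 * θ),
        (1 - ‖a‖ ^ 2) / ‖Complex.exp (t * Complex.I) - a‖ ^ 2)
      ≥ 4 * Real.arctan ((1 - r) / (1 + r) * Real.tan (θ / 2)) :=
  poisson_arc_integral_ge' θ r hθ0 hθπ hr0 hr1 a ha α

end PoissonAuxSection
end

section
/- Let B be a finite Blaschke product of degree n whose zeros all satisfy |a_k| ≤ r < 1, and let e^{iα}, e^{iβ} with α < β < α + 2π be two consecutive solutions of zB(z) = 1 on the unit circle. Then ∫_α^β (1 + |B'(e^{it})|) dt = 2π. -/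
open Complex

private lemma normsq_helper (w : ℂ) : ((‖w‖ : ℝ) : ℂ) ^ 2 = w * (starRingEnd ℂ) w := by
  rw [Complex.mul_conj]
  norm_cast
  rw [Complex.sq_norm]

private lemma circle_hasDerivAt (t : ℝ) :
    HasDerivAt (fun s : ℝ => Complex.exp (s * Complex.I))
      (Complex.I * Complex.exp (t * Complex.I)) t := by
  have h := (Complex.ofRealCLM.hasDerivAt.mul_const Complex.I).cexp (x := t)
  simpa [mul_comm] using h

private lemma factor_hasDerivAt (a : ℂ) (ha : ‖a‖ < 1) (t : ℝ) :
    HasDerivAt (fun s : ℝ =>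
        (Complex.exp (s * Complex.I) - a) /
          (1 - (starRingEnd ℂ) a * Complex.exp (s * Complex.I)))
      (Complex.I * (((1 - ‖a‖ ^ 2) / ‖Complex.exp (t * Complex.I) - a‖ ^ 2 : ℝ) : ℂ) *
        ((Complex.exp (t * Complex.I) - a) /
          (1 - (starRingEnd ℂ) a * Complex.exp (t * Complex.I)))) t := by
  set z : ℂ := Complex.exp (t * Complex.I) with hz
  have hznorm : ‖z‖ = 1 := by
    simpa [hz] using Complex.norm_exp_ofReal_mul_I t
  have hzne : z ≠ 0 := Complex.exp_ne_zero _
  have hzc : z * (starRingEnd ℂ) z = 1 := by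
    rw [← normsq_helper, hznorm]; norm_num
  have hu : (starRingEnd ℂ) z = z⁻¹ :=
    eq_inv_of_mul_eq_one_left (by linear_combination hzc)
  have hden : 1 - (starRingEnd ℂ) a * z ≠ 0 := by
    intro h
    have h1 : ‖(starRingEnd ℂ) a * z‖ = 1 := by
      have : (starRingEnd ℂ) a * z = 1 := by linear_combination -h
      simp [this]
    rw [norm_mul, RCLike.norm_conj, hznorm, mul_one] at h1
    exact absurd h1 (ne_of_lt ha)
  have hnum : z - a ≠ 0 := by
    intro h
    have : z = a := by linear_combination h
    rw [← this] at ha; exact absurd hznorm (ne_of_lt ha)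
  have hden' : z⁻¹ - (starRingEnd ℂ) a ≠ 0 := by
    intro h
    have h' : (starRingEnd ℂ) a = z⁻¹ := by linear_combination -h
    have : (starRingEnd ℂ) a * z = 1 := by rw [h']; field_simp
    exact hden (by rw [this, sub_self])
  have hnormsq : ((‖z - a‖ : ℝ) : ℂ) ^ 2 = (z - a) * (1 - (starRingEnd ℂ) a * z) / z := by
    rw [normsq_helper, map_sub, hu, eq_div_iff hzne]
    linear_combination (z - a) * inv_mul_cancel₀ hzne
  have hanormsq : ((‖a‖ : ℝ) : ℂ) ^ 2 = a * (starRingEnd ℂ) a := normsq_helper a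
  have h1 : HasDerivAt (fun s : ℝ => Complex.exp (s * Complex.I) - a)
      (Complex.I * z) t := (circle_hasDerivAt t).sub_const a
  have h2 : HasDerivAt (fun s : ℝ => 1 - (starRingEnd ℂ) a * Complex.exp (s * Complex.I))
      (-((starRingEnd ℂ) a * (Complex.I * z))) t :=
    (((circle_hasDerivAt t).const_mul ((starRingEnd ℂ) a)).const_sub 1)
  have h3 := h1.div h2 hden
  convert h3 using 1
  all_goals try (with_reducible_and_instances rfl)
  rw [← hz]
  clear_value z
  push_cast
  rw [hnormsq, hanormsq]
  field_simp
  ring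

/-- For a finite Blaschke product `B` of degree `n` with zeros `|aₖ| ≤ r < 1`, if
`e^{iα}` and `e^{iβ}` (with `α < β < α + 2π`) are consecutive solutions of
`z B(z) = 1` on the unit circle, then `∫_α^β (1 + |B'(e^{it})|) dt = 2π`. -/
theorem consecutive_prevertices_integral (n : ℕ) (r : ℝ) (hr : r < 1)
    (a : Fin n → ℂ) (ha : ∀ k, ‖a k‖ ≤ r) (B : ℂ → ℂ)
    (hB : ∀ z : ℂ, B z = ∏ k, (z - a k) / (1 - (starRingEnd ℂ) (a k) * z))
    (α β : ℝ) (hαβ : α < β) (hβ : β < α + 2 * Real.pi)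
    (hα1 : Complex.exp (α * Complex.I) * B (Complex.exp (α * Complex.I)) = 1)
    (hβ1 : Complex.exp (β * Complex.I) * B (Complex.exp (β * Complex.I)) = 1)
    (hcons : ∀ t : ℝ, α < t → t < β →
      Complex.exp (t * Complex.I) * B (Complex.exp (t * Complex.I)) ≠ 1) :
    (∫ t in α..β,
        (1 + ∑ k, (1 - ‖a k‖ ^ 2) / ‖Complex.exp (t * Complex.I) - a k‖ ^ 2))
      = 2 * Real.pi := by
  classical
  have ha1 : ∀ k, ‖a k‖ < 1 := fun k => lt_of_le_of_lt (ha k) hr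
  set h : ℝ → ℝ :=
    fun t => 1 + ∑ k, (1 - ‖a k‖ ^ 2) / ‖Complex.exp (t * Complex.I) - a k‖ ^ 2 with hh
  -- basic nonvanishing
  have hnum : ∀ (t : ℝ) (k : Fin n), Complex.exp (t * Complex.I) - a k ≠ 0 := by
    intro t k hcontra
    have h1 : Complex.exp (t * Complex.I) = a k := by linear_combination hcontra
    have h2 : ‖Complex.exp ((t : ℝ) * Complex.I)‖ = 1 := by
      simpa using Complex.norm_exp_ofReal_mul_I t
    rw [h1] at h2
    exact absurd h2 (ne_of_lt (ha1 k))
  have hpos : ∀ (t : ℝ) (k : Fin n), 0 < ‖Complex.exp (t * Complex.I) - a k‖ ^ 2 := by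
    intro t k
    have := norm_pos_iff.mpr (hnum t k)
    positivity
  have h1le : ∀ t, (1 : ℝ) ≤ h t := by
    intro t
    have : (0 : ℝ) ≤ ∑ k, (1 - ‖a k‖ ^ 2) / ‖Complex.exp (t * Complex.I) - a k‖ ^ 2 := by
      apply Finset.sum_nonneg
      intro k _
      apply div_nonneg _ (le_of_lt (hpos t k))
      nlinarith [ha1 k, norm_nonneg (a k)]
    simp only [hh]; linarith
  have hcont : Continuous h := by
    apply Continuous.add continuous_const
    apply continuous_finset_sum
    intro k _
    apply Continuous.div continuous_const
    · exact ((((Complex.continuous_ofReal.mul continuous_const).cexp).sub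
        continuous_const).norm).pow 2
    · intro t; exact (hpos t k).ne'
  -- derivative of f t = exp(t I) * B (exp (t I))
  have hf : ∀ t : ℝ, HasDerivAt
      (fun s : ℝ => Complex.exp (s * Complex.I) * B (Complex.exp (s * Complex.I)))
      (Complex.I * ((h t : ℝ) : ℂ) *
        (Complex.exp (t * Complex.I) * B (Complex.exp (t * Complex.I)))) t := by
    intro t
    have hP : HasDerivAt (fun s : ℝ => B (Complex.exp (s * Complex.I)))
        (Complex.I * (((∑ k, (1 - ‖a k‖ ^ 2) / ‖Complex.exp (t * Complex.I) - a k‖ ^ 2 : ℝ)) : ℂ)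
          * B (Complex.exp (t * Complex.I))) t := by
      have hprod := HasDerivAt.finset_prod (u := Finset.univ)
        (f := fun k (s : ℝ) => (Complex.exp (s * Complex.I) - a k) /
          (1 - (starRingEnd ℂ) (a k) * Complex.exp (s * Complex.I)))
        (f' := fun k => Complex.I *
          (((1 - ‖a k‖ ^ 2) / ‖Complex.exp (t * Complex.I) - a k‖ ^ 2 : ℝ) : ℂ) *
          ((Complex.exp (t * Complex.I) - a k) /
            (1 - (starRingEnd ℂ) (a k) * Complex.exp (t * Complex.I))))
        (x := t) (fun k _ => factor_hasDerivAt (a k) (ha1 k) t)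
      have heq : ∀ s : ℝ, B (Complex.exp (s * Complex.I)) =
          ∏ k, (Complex.exp (s * Complex.I) - a k) /
            (1 - (starRingEnd ℂ) (a k) * Complex.exp (s * Complex.I)) := fun s => hB _
      rw [show (fun s : ℝ => B (Complex.exp (s * Complex.I))) = fun s : ℝ =>
          ∏ k, (Complex.exp (s * Complex.I) - a k) /
            (1 - (starRingEnd ℂ) (a k) * Complex.exp (s * Complex.I)) from funext heq]
      convert hprod using 1
      all_goals try (with_reducible_and_instances rfl)
      all_goals try (funext s; simp only [Finset.prod_apply]; done)
      rw [heq t]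
      rw [Finset.sum_congr rfl (fun k _ => smul_eq_mul _ _)]
      push_cast
      rw [mul_assoc, Finset.sum_mul, Finset.mul_sum]
      apply Finset.sum_congr rfl
      intro k _
      rw [← Finset.prod_erase_mul Finset.univ _ (Finset.mem_univ k)]
      ring
    have := (circle_hasDerivAt t).mul hP
    convert this using 1
    all_goals try (with_reducible_and_instances rfl)
    simp only [hh]
    push_cast
    ring
  -- the primitive G
  set G : ℝ → ℝ := fun x => ∫ s in α..x, h s with hG0
  have hG : ∀ t, HasDerivAt G (h t) t :=
    fun t => (hcont.integral_hasStrictDerivAt α t).hasDerivAt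
  have hGα : G α = 0 := intervalIntegral.integral_same
  -- f t = exp (G t * I)
  have key : ∀ t : ℝ, Complex.exp (t * Complex.I) * B (Complex.exp (t * Complex.I))
      = Complex.exp (((G t : ℝ) : ℂ) * Complex.I) := by
    have hφ : ∀ t : ℝ, HasDerivAt (fun s : ℝ =>
        Complex.exp (s * Complex.I) * B (Complex.exp (s * Complex.I)) *
          Complex.exp (-(((G s : ℝ) : ℂ) * Complex.I))) 0 t := by
      intro t
      have hE : HasDerivAt (fun s : ℝ => Complex.exp (-(((G s : ℝ) : ℂ) * Complex.I)))
          (Complex.exp (-(((G t : ℝ) : ℂ) * Complex.I)) * (-(((h t : ℝ) : ℂ) * Complex.I))) t := by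
        exact (((hG t).ofReal_comp.mul_const Complex.I).neg).cexp
      have := (hf t).mul hE
      convert this using 1
      all_goals try (with_reducible_and_instances rfl)
      ring
    have hconst := is_const_of_deriv_eq_zero (𝕜 := ℝ)
      (f := fun s : ℝ => Complex.exp (s * Complex.I) * B (Complex.exp (s * Complex.I)) *
        Complex.exp (-(((G s : ℝ) : ℂ) * Complex.I)))
      (fun x => (hφ x).differentiableAt) (fun x => (hφ x).deriv)
    intro t
    have h1 := hconst t α
    try simp only at h1
    rw [hGα, hα1] at h1
    simp only [Complex.ofReal_zero, neg_zero, zero_mul, Complex.exp_zero, mul_one, one_mul] at h1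
    have h2 : Complex.exp (-(((G t : ℝ) : ℂ) * Complex.I)) =
        (Complex.exp (((G t : ℝ) : ℂ) * Complex.I))⁻¹ := by
      rw [← Complex.exp_neg]
    rw [h2] at h1
    field_simp at h1
    rwa [mul_comm I] at h1
  -- G β is a multiple of 2π
  obtain ⟨m, hm⟩ : ∃ m : ℤ, ((G β : ℝ) : ℂ) * Complex.I = m * (2 * Real.pi * Complex.I) := by
    rw [← Complex.exp_eq_one_iff, ← key, hβ1]
  have hGβ : G β = m * (2 * Real.pi) := by
    have : ((G β : ℝ) : ℂ) = ((m * (2 * Real.pi) : ℝ) : ℂ) := by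
      apply mul_right_cancel₀ Complex.I_ne_zero
      push_cast
      push_cast at hm
      linear_combination hm
    exact_mod_cast this
  -- positivity of G β
  have hint : IntervalIntegrable h MeasureTheory.volume α β := hcont.intervalIntegrable α β
  have hGβpos : 0 < G β := by
    have hmono := intervalIntegral.integral_mono_on (le_of_lt hαβ)
      (intervalIntegrable_const (c := (1:ℝ))) hint (fun x _ => h1le x)
    have : ∫ _ in α..β, (1:ℝ) = β - α := by simp
    rw [this] at hmono
    have : (0:ℝ) < β - α := by linarith
    calc (0:ℝ) < β - α := this
      _ ≤ G β := hmono
  have hπ := Real.pi_pos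
  have hm1 : 1 ≤ m := by
    by_contra hcon
    push_neg at hcon
    have hmle : m ≤ 0 := by omega
    have : (m : ℝ) ≤ 0 := by exact_mod_cast hmle
    nlinarith
  -- rule out m ≥ 2 using consecutiveness
  have hm2 : m < 2 := by
    by_contra hcon
    push_neg at hcon
    have hm2' : (2 : ℝ) ≤ (m : ℝ) := by exact_mod_cast hcon
    have hGcont : Continuous G :=
      continuous_iff_continuousAt.mpr fun x => (hG x).continuousAt
    have hmem : (2 * Real.pi) ∈ Set.Icc (G α) (G β) := by
      rw [hGα, hGβ]
      constructor
      · positivity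
      · nlinarith
    obtain ⟨t, ht, hGt⟩ := intermediate_value_Icc (le_of_lt hαβ) hGcont.continuousOn hmem
    have htα : α < t := by
      rcases eq_or_lt_of_le ht.1 with he | hlt
      · exfalso; rw [← he, hGα] at hGt; nlinarith
      · exact hlt
    have htβ : t < β := by
      rcases eq_or_lt_of_le ht.2 with he | hlt
      · exfalso; rw [he, hGβ] at hGt; nlinarith
      · exact hlt
    apply hcons t htα htβ
    rw [key t, hGt]
    push_cast
    exact Complex.exp_two_pi_mul_I
  have : m = 1 := le_antisymm (by omega) hm1
  show G β = 2 * Real.pi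
  rw [hGβ, this]
  push_cast
  ring
end

section
/- Let B be a Blaschke product of degree n with all zeros satisfying |a_k| ≤ r < 1. If e^{iα} and e^{iβ} are consecutive solutions of zB(z) = 1 with 0 < β - α = 2θ* ≤ 2π, then θ* ≥ θ, where θ ∈ (0, π/2) is the unique root of π = θ + 2n·arctan(((1+r)/(1-r))·tan(θ/2)). -/
open Complex

noncomputable def MSu (a : ℂ) (t : ℝ) : ℂ := 1 - (starRingEnd ℂ) a * Complex.exp (t*Complex.I)
noncomputable def MSpsi (a : ℂ) (t : ℝ) : ℝ := Real.arctan ((MSu a t).im / (MSu a t).re)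
noncomputable def MSP (a : ℂ) (t : ℝ) : ℝ := (1-‖a‖^2)/((MSu a t).re^2 + (MSu a t).im^2)

noncomputable def MSq (ρ : ℝ) (u : ℝ) : ℝ := (1 - ρ^2) / (1 - 2*ρ*Real.cos u + ρ^2)



lemma MSdenom_pos {ρ : ℝ} (h0 : 0 ≤ ρ) (h1 : ρ < 1) (u : ℝ) :
    0 < 1 - 2*ρ*Real.cos u + ρ^2 := by
  nlinarith [Real.cos_le_one u, Real.neg_one_le_cos u]

lemma MSq_nonneg {ρ : ℝ} (h0 : 0 ≤ ρ) (h1 : ρ < 1) (u : ℝ) : 0 ≤ MSq ρ u := by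
  have h2 := MSdenom_pos h0 h1 u
  have h3 : (0:ℝ) < 1 - ρ^2 := by nlinarith
  exact le_of_lt (div_pos h3 h2)

lemma MSq_cont {ρ : ℝ} (h0 : 0 ≤ ρ) (h1 : ρ < 1) : Continuous (MSq ρ) := by
  apply Continuous.div continuous_const (by continuity)
  intro u; exact (MSdenom_pos h0 h1 u).ne'

lemma MSu_re_pos {a : ℂ} (ha : ‖a‖ < 1) (t : ℝ) : 0 < (MSu a t).re := by
  have h1 : ‖(starRingEnd ℂ) a * Complex.exp (t*Complex.I)‖ < 1 := by
    rw [norm_mul]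
    simpa [Complex.norm_exp_ofReal_mul_I, Complex.norm_conj] using ha
  have h2 : ((starRingEnd ℂ) a * Complex.exp (t*Complex.I)).re < 1 :=
    lt_of_le_of_lt (Complex.re_le_norm _) h1
  simp only [MSu, Complex.sub_re, Complex.one_re]
  linarith

lemma MSpolar {v : ℂ} (hv : 0 < v.re) :
    v = (‖v‖ : ℝ) * Complex.exp ((Real.arctan (v.im / v.re) : ℝ) * Complex.I) := by
  have hvre : v.re ≠ 0 := hv.ne'
  set x := v.im / v.re with hx
  have hs : Real.sqrt (1 + x^2) ≠ 0 := by positivity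
  have hnorm : ‖v‖ = v.re * Real.sqrt (1 + x^2) := by
    rw [← Real.sqrt_sq hv.le, ← Real.sqrt_mul (sq_nonneg _)]
    rw [Complex.norm_def, Complex.normSq_apply]
    congr 1
    rw [hx]
    field_simp
  apply Complex.ext
  · simp only [Complex.mul_re, Complex.ofReal_re, Complex.ofReal_im,
      Complex.exp_ofReal_mul_I_re, Complex.exp_ofReal_mul_I_im, Real.cos_arctan]
    rw [hnorm]
    field_simp
    ring
  · simp only [Complex.mul_im, Complex.ofReal_re, Complex.ofReal_im,
      Complex.exp_ofReal_mul_I_re, Complex.exp_ofReal_mul_I_im, Real.sin_arctan]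
    rw [hnorm]
    field_simp
    rw [hx]
    field_simp
    ring

lemma MSfactor {a : ℂ} (ha : ‖a‖ < 1) (t : ℝ) :
    (Complex.exp (t*Complex.I) - a) / (1 - (starRingEnd ℂ) a * Complex.exp (t*Complex.I))
      = Complex.exp (((t - 2*MSpsi a t : ℝ)) * Complex.I) := by
  have hre := MSu_re_pos ha t
  have hu0 : MSu a t ≠ 0 := fun h => by simp [h] at hre
  set ψ := MSpsi a t with hψ
  set N : ℂ := ((‖MSu a t‖ : ℝ) : ℂ) with hN
  have hpol : MSu a t = N * Complex.exp ((ψ:ℝ) * Complex.I) := MSpolar hre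
  have hconj : (starRingEnd ℂ) (MSu a t) = N * Complex.exp (-((ψ:ℝ) * Complex.I)) := by
    rw [hpol, map_mul, ← Complex.exp_conj]
    simp [hN, Complex.conj_ofReal]
  have hzconj : Complex.exp (t*Complex.I) * (starRingEnd ℂ) (MSu a t)
      = Complex.exp (t*Complex.I) - a := by
    simp only [MSu, map_sub, map_one, map_mul, RingHomCompTriple.comp_apply, RingHom.id_apply]
    rw [← Complex.exp_conj]
    have h2 : (starRingEnd ℂ) ((t:ℂ)*Complex.I) = -((t:ℂ)*Complex.I) := by
      simp [Complex.conj_ofReal]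
    rw [h2, mul_sub, mul_one,
      show Complex.exp ((t:ℂ)*Complex.I) * (a * Complex.exp (-((t:ℂ)*Complex.I)))
        = a * (Complex.exp ((t:ℂ)*Complex.I) * Complex.exp (-((t:ℂ)*Complex.I))) by ring,
      ← Complex.exp_add]
    simp
  show (Complex.exp (t*Complex.I) - a) / MSu a t = _
  rw [div_eq_iff hu0, ← hzconj, hconj]
  conv_rhs => rw [hpol]
  rw [show Complex.exp ((t:ℝ)*Complex.I) * (N * Complex.exp (-((ψ:ℝ) * Complex.I)))
      = N * (Complex.exp ((t:ℝ)*Complex.I) * Complex.exp (-((ψ:ℝ) * Complex.I))) by ring,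
    show Complex.exp (((t - 2*ψ:ℝ))*Complex.I) * (N * Complex.exp ((ψ:ℝ) * Complex.I))
      = N * (Complex.exp (((t - 2*ψ:ℝ))*Complex.I) * Complex.exp ((ψ:ℝ) * Complex.I)) by ring,
    ← Complex.exp_add, ← Complex.exp_add]
  congr 2
  push_cast
  ring

set_option maxHeartbeats 800000 in
lemma MSphase_hasDeriv {a : ℂ} (ha : ‖a‖ < 1) (t : ℝ) :
    HasDerivAt (fun s => s - 2 * MSpsi a s) (MSP a t) t := by
  set p := a.re; set q := a.im
  set f : ℝ → ℝ := fun s => 1 - (p * Real.cos s + q * Real.sin s) with hf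
  set g : ℝ → ℝ := fun s => q * Real.cos s - p * Real.sin s with hg
  have hfre : ∀ s, (MSu a s).re = f s := by
    intro s
    simp only [MSu, Complex.sub_re, Complex.one_re, Complex.mul_re, Complex.conj_re,
      Complex.conj_im, Complex.exp_ofReal_mul_I_re, Complex.exp_ofReal_mul_I_im, hf]
    ring
  have hgim : ∀ s, (MSu a s).im = g s := by
    intro s
    simp only [MSu, Complex.sub_im, Complex.one_im, Complex.mul_im, Complex.conj_re,
      Complex.conj_im, Complex.exp_ofReal_mul_I_re, Complex.exp_ofReal_mul_I_im, hg]
    ring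
  have hfpos : 0 < f t := hfre t ▸ MSu_re_pos ha t
  have hdf : HasDerivAt f (-(g t)) t := by
    have h1 : HasDerivAt (fun s => p * Real.cos s + q * Real.sin s)
        (p * (-Real.sin t) + q * Real.cos t) t :=
      ((Real.hasDerivAt_cos t).const_mul p).add ((Real.hasDerivAt_sin t).const_mul q)
    have h2 : HasDerivAt (fun s => 1 - (p * Real.cos s + q * Real.sin s)) _ t :=
      (hasDerivAt_const t (1:ℝ)).sub h1
    convert h2 using 1
    simp only [hg]; ring
  have hdg : HasDerivAt g (f t - 1) t := by
    have h1 : HasDerivAt (fun s => q * Real.cos s - p * Real.sin s)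
        (q * (-Real.sin t) - p * Real.cos t) t :=
      ((Real.hasDerivAt_cos t).const_mul q).sub ((Real.hasDerivAt_sin t).const_mul p)
    convert h1 using 1
    simp only [hf]; ring
  have hdiv : HasDerivAt (fun s => g s / f s)
      (((f t - 1) * f t - g t * (-(g t))) / (f t)^2) t := hdg.div hdf hfpos.ne'
  have harc : HasDerivAt (fun s => Real.arctan (g s / f s))
      (1 / (1 + (g t / f t)^2) * (((f t - 1) * f t - g t * (-(g t))) / (f t)^2)) t := hdiv.arctan
  have hpsi_eq : (fun s => s - 2 * MSpsi a s) = fun s => s - 2 * Real.arctan (g s / f s) := by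
    funext s; rw [MSpsi, hfre s, hgim s]
  rw [hpsi_eq]
  have hfin : HasDerivAt (fun s => s - 2 * Real.arctan (g s / f s)) _ t :=
    (hasDerivAt_id t).sub (harc.const_mul 2)
  convert hfin using 1
  rw [MSP, hfre, hgim]
  set F := f t with hF'
  set G := g t with hG'
  have hden : 0 < F^2 + G^2 := by positivity
  have hna : ‖a‖^2 = p^2 + q^2 := by
    rw [Complex.sq_norm, Complex.normSq_apply]; ring
  have hSC := Real.sin_sq_add_cos_sq t
  have hfg : F^2 + G^2 = 1 - 2*(p*Real.cos t + q*Real.sin t) + (p^2+q^2) := by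
    simp only [hF', hG', hf, hg]
    nlinarith [hSC]
  have hFX : F = 1 - (p*Real.cos t + q*Real.sin t) := by simp only [hF', hf]
  have hkey : 1 - (p^2+q^2) = 2*F - (F^2+G^2) := by
    rw [hfg, hFX]; ring
  have e1 : 1 / (1 + (G/F)^2) * (((F - 1) * F - G * (-G)) / F^2)
      = (F^2 + G^2 - F)/(F^2+G^2) := by
    have h1 : F ≠ 0 := hfpos.ne'
    have h2 : F^2 + G^2 ≠ 0 := hden.ne'
    field_simp
    ring
  have e2 : (2*F - (F^2+G^2))/(F^2+G^2) = 1 - 2*((F^2+G^2-F)/(F^2+G^2)) := by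
    have h2 : F^2 + G^2 ≠ 0 := hden.ne'
    field_simp
    ring
  rw [hna, e1, hkey, e2]

lemma MSq_even (ρ x : ℝ) : MSq ρ (-x) = MSq ρ x := by simp [MSq, Real.cos_neg]

lemma MSq_per (ρ x : ℝ) : MSq ρ (x + 2*Real.pi) = MSq ρ x := by
  simp [MSq, Real.cos_add_two_pi]

lemma MSq_abs (ρ x : ℝ) : MSq ρ |x| = MSq ρ x := by
  rcases abs_cases x with ⟨h, _⟩ | ⟨h, _⟩
  · rw [h]
  · rw [h, MSq_even]

lemma MSq_anti {ρ : ℝ} (h0 : 0 ≤ ρ) (h1 : ρ < 1) :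
    AntitoneOn (MSq ρ) (Set.Icc 0 Real.pi) := by
  intro x hx y hy hxy
  have hc : Real.cos y ≤ Real.cos x := Real.cos_le_cos_of_nonneg_of_le_pi hx.1 hy.2 hxy
  have hnum : (0:ℝ) ≤ 1 - ρ^2 := by nlinarith
  have h2 := MSdenom_pos h0 h1 x
  unfold MSq
  gcongr

lemma MSq_hasDeriv {ρ : ℝ} (h0 : 0 ≤ ρ) (h1 : ρ < 1) {u : ℝ}
    (hu : u ∈ Set.Ioo (-Real.pi) Real.pi) :
    HasDerivAt (fun x => 2 * Real.arctan ((1+ρ)/(1-ρ) * Real.tan (x/2))) (MSq ρ u) u := by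
  set c := (1+ρ)/(1-ρ) with hc
  have hρ1 : (0:ℝ) < 1 - ρ := by linarith
  have hcpos : 0 < c := div_pos (by linarith) hρ1
  have hC : 0 < Real.cos (u/2) := by
    apply Real.cos_pos_of_mem_Ioo
    constructor <;> [linarith [hu.1]; linarith [hu.2]]
  have h2 : HasDerivAt (fun x : ℝ => x/2) (1/2 : ℝ) u := by
    simpa using (hasDerivAt_id u).div_const 2
  have htan : HasDerivAt (fun x : ℝ => Real.tan (x/2)) (1/Real.cos (u/2)^2 * (1/2)) u :=
    HasDerivAt.comp (h₂ := Real.tan) u (Real.hasDerivAt_tan hC.ne') h2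
  have harc : HasDerivAt (fun x : ℝ => 2 * Real.arctan (c * Real.tan (x/2)))
      (2 * (1 / (1 + (c * Real.tan (u/2))^2) * (c * (1/Real.cos (u/2)^2 * (1/2))))) u :=
    ((htan.const_mul c).arctan).const_mul 2
  convert harc using 1
  set C := Real.cos (u/2) with hCd
  set S := Real.sin (u/2) with hSd
  have hSC : S^2 + C^2 = 1 := Real.sin_sq_add_cos_sq (u/2)
  have hcosu : Real.cos u = 2*C^2 - 1 := by
    rw [show u = 2*(u/2) by ring, Real.cos_two_mul]
  have htanE : Real.tan (u/2) = S / C := Real.tan_eq_sin_div_cos (u/2)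
  have hden : 1 - 2*ρ*Real.cos u + ρ^2 = (1-ρ)^2*C^2 + (1+ρ)^2*S^2 := by
    rw [hcosu]; nlinarith [hSC]
  have hdpos : 0 < (1-ρ)^2*C^2 + (1+ρ)^2*S^2 := by nlinarith [hSC, sq_nonneg S, sq_nonneg ((1+ρ)*S)]
  rw [MSq, hden, htanE, hc]
  rw [div_eq_iff hdpos.ne']
  field_simp
  ring

lemma MSq_symm_integral {ρ θ : ℝ} (h0 : 0 ≤ ρ) (h1 : ρ < 1) (hθ0 : 0 ≤ θ)
    (hθ : θ ≤ Real.pi/2) :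
    ∫ u in (-θ)..θ, MSq ρ u = 4 * Real.arctan ((1+ρ)/(1-ρ) * Real.tan (θ/2)) := by
  have hπ := Real.pi_pos
  have hFTC : ∫ u in (-θ)..θ, MSq ρ u
      = (2 * Real.arctan ((1+ρ)/(1-ρ) * Real.tan (θ/2)))
        - (2 * Real.arctan ((1+ρ)/(1-ρ) * Real.tan ((-θ)/2))) := by
    apply intervalIntegral.integral_eq_sub_of_hasDerivAt
    · intro x hx
      rw [Set.uIcc_of_le (by linarith)] at hx
      exact MSq_hasDeriv h0 h1 ⟨by linarith [hx.1], by linarith [hx.2]⟩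
    · exact (MSq_cont h0 h1).intervalIntegrable _ _
  rw [hFTC, show (-θ)/2 = -(θ/2) by ring, Real.tan_neg, mul_neg, Real.arctan_neg]
  ring

lemma MSJ_le {ρ θ : ℝ} (h0 : 0 ≤ ρ) (h1 : ρ < 1) (hθ0 : 0 < θ) (hθ : θ ≤ Real.pi/2)
    (m : ℝ) :
    (∫ u in (m-θ)..(m+θ), MSq ρ u) ≤ ∫ u in (-θ)..θ, MSq ρ u := by
  have hπ := Real.pi_pos
  have hq := MSq_cont h0 h1
  set J : ℝ → ℝ := fun m => ∫ u in (m-θ)..(m+θ), MSq ρ u with hJ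
  have hJeven : ∀ m, J (-m) = J m := by
    intro m
    show (∫ u in (-m-θ)..(-m+θ), MSq ρ u) = ∫ u in (m-θ)..(m+θ), MSq ρ u
    have : (∫ u in (-m-θ)..(-m+θ), MSq ρ u) = ∫ u in (-m-θ)..(-m+θ), MSq ρ (-u) := by
      congr 1; funext u; rw [MSq_even]
    rw [this, intervalIntegral.integral_comp_neg (MSq ρ)]
    congr 1 <;> ring
  have hJper : Function.Periodic J (2*Real.pi) := by
    intro m
    show (∫ u in (m+2*Real.pi-θ)..(m+2*Real.pi+θ), MSq ρ u) = _
    have := intervalIntegral.integral_comp_add_right (a := m - θ) (b := m + θ) (MSq ρ) (2*Real.pi)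
    rw [show m+2*Real.pi-θ = m - θ + 2*Real.pi by ring, show m+2*Real.pi+θ = m + θ + 2*Real.pi by ring,
      ← this]
    congr 1; funext u; rw [MSq_per]
  have hG : ∀ x : ℝ, HasDerivAt (fun y => ∫ u in (0:ℝ)..y, MSq ρ u) (MSq ρ x) x := by
    intro x
    exact intervalIntegral.integral_hasDerivAt_right
      (hq.intervalIntegrable (μ := MeasureTheory.volume) 0 x)
      (hq.stronglyMeasurableAtFilter MeasureTheory.volume (nhds x)) hq.continuousAt
  have hJsplit : ∀ m : ℝ, J m = (∫ u in (0:ℝ)..(m+θ), MSq ρ u) - ∫ u in (0:ℝ)..(m-θ), MSq ρ u := by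
    intro m
    have h2 := intervalIntegral.integral_add_adjacent_intervals
      (hq.intervalIntegrable (μ := MeasureTheory.volume) 0 (m-θ))
      (hq.intervalIntegrable (μ := MeasureTheory.volume) (m-θ) (m+θ))
    show (∫ u in (m-θ)..(m+θ), MSq ρ u) = _
    linarith [h2]
  have hJderiv : ∀ m : ℝ, HasDerivAt J (MSq ρ (m+θ) - MSq ρ (m-θ)) m := by
    intro m
    have h1 : HasDerivAt (fun y : ℝ => ∫ u in (0:ℝ)..(y+θ), MSq ρ u) (MSq ρ (m+θ)) m := by
      have := (hG (m+θ)).comp m ((hasDerivAt_id m).add_const θ)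
      simpa [Function.comp_def] using this
    have h2 : HasDerivAt (fun y : ℝ => ∫ u in (0:ℝ)..(y-θ), MSq ρ u) (MSq ρ (m-θ)) m := by
      have := (hG (m-θ)).comp m ((hasDerivAt_id m).sub_const θ)
      simpa [Function.comp_def] using this
    have h3 := h1.sub h2
    have : J = fun y : ℝ => (∫ u in (0:ℝ)..(y+θ), MSq ρ u) - ∫ u in (0:ℝ)..(y-θ), MSq ρ u := by
      funext y; exact hJsplit y
    rw [this]
    exact h3
  have hstep : ∀ m ∈ Set.Icc (0:ℝ) Real.pi, MSq ρ (m+θ) ≤ MSq ρ (m-θ) := by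
    intro m hm
    rcases le_or_gt (m+θ) Real.pi with hmp | hmp
    · rw [← MSq_abs ρ (m-θ)]
      apply MSq_anti h0 h1
      · exact ⟨abs_nonneg _, by rw [abs_le]; constructor <;> [linarith [hm.1]; linarith [hm.2]]⟩
      · exact ⟨by linarith [hm.1], hmp⟩
      · rw [abs_le]; constructor <;> [linarith [hm.1]; linarith [hθ0]]
    · have he1 : MSq ρ (2*Real.pi - (m+θ)) = MSq ρ (m+θ) := by
        rw [show 2*Real.pi-(m+θ) = -(m+θ)+2*Real.pi by ring, MSq_per, MSq_even]
      rw [← he1]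
      have hm2 : θ ≤ m := by linarith [hm.2, hθ, hmp]
      apply MSq_anti h0 h1
      · exact ⟨by linarith, by linarith [hm.2]⟩
      · exact ⟨by linarith [hm.2, hθ], by linarith [hmp.le]⟩
      · linarith [hm.2]
  have hanti : AntitoneOn J (Set.Icc 0 Real.pi) := by
    apply antitoneOn_of_deriv_nonpos (convex_Icc 0 Real.pi)
    · exact fun x _ => ((hJderiv x).continuousAt).continuousWithinAt
    · intro x hx
      exact ((hJderiv x).differentiableAt).differentiableWithinAt
    · intro x hx
      rw [(hJderiv x).deriv]
      rw [interior_Icc] at hx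
      have := hstep x ⟨hx.1.le, hx.2.le⟩
      linarith
  -- reduce arbitrary m into [-π, π]
  set k : ℤ := ⌊(m + Real.pi) / (2*Real.pi)⌋ with hk
  set m' : ℝ := m - 2*Real.pi*(k:ℝ) with hm'
  have h2π : (0:ℝ) < 2*Real.pi := by linarith
  have hkle : (k:ℝ) ≤ (m + Real.pi) / (2*Real.pi) := Int.floor_le _
  have hklt : (m + Real.pi) / (2*Real.pi) - 1 < (k:ℝ) := by
    have := Int.lt_floor_add_one ((m + Real.pi) / (2*Real.pi))
    linarith
  have hmlb : -Real.pi ≤ m' := by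
    rw [hm']
    have := (le_div_iff₀ h2π).mp hkle
    linarith
  have hmub : m' ≤ Real.pi := by
    rw [hm']
    have h5 : ((m + Real.pi) / (2*Real.pi) - 1) * (2*Real.pi) < (k:ℝ) * (2*Real.pi) := by
      exact mul_lt_mul_of_pos_right hklt h2π
    have h6 : ((m + Real.pi) / (2*Real.pi)) * (2*Real.pi) = m + Real.pi := by
      field_simp
    nlinarith
  have hJm : J m = J m' := by
    rw [hm', show m - 2*Real.pi*(k:ℝ) = m - (k:ℝ)*(2*Real.pi) by ring]
    exact (hJper.sub_int_mul_eq k).symm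
  have hJm' : J m' = J |m'| := by
    rcases abs_cases m' with ⟨h, _⟩ | ⟨h, _⟩
    · rw [h]
    · rw [h, hJeven]
  have hfin : J |m'| ≤ J 0 :=
    hanti ⟨le_refl 0, hπ.le⟩ ⟨abs_nonneg _, abs_le.mpr ⟨by linarith, hmub⟩⟩ (abs_nonneg _)
  have hJ0 : J 0 = ∫ u in (-θ)..θ, MSq ρ u := by
    show (∫ u in (0-θ)..(0+θ), MSq ρ u) = _
    congr 1 <;> ring
  calc (∫ u in (m-θ)..(m+θ), MSq ρ u) = J m := rfl
    _ = J |m'| := by rw [hJm, hJm']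
    _ ≤ J 0 := hfin
    _ = _ := hJ0

lemma MSP_eq_q (a : ℂ) (t : ℝ) : MSP a t = MSq ‖a‖ (t - Complex.arg a) := by
  have h1 : ((‖a‖ : ℝ) : ℂ) * Complex.exp ((Complex.arg a : ℝ) * Complex.I) = a :=
    Complex.norm_mul_exp_arg_mul_I a
  have hw : (starRingEnd ℂ) a * Complex.exp (t*Complex.I)
      = ((‖a‖ : ℝ) : ℂ) * Complex.exp (((t - Complex.arg a : ℝ) : ℂ) * Complex.I) := by
    conv_lhs => rw [← h1]
    rw [map_mul, ← Complex.exp_conj,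
      show (starRingEnd ℂ) ((Complex.arg a : ℝ) * Complex.I)
        = -((Complex.arg a : ℝ) * Complex.I) by simp [Complex.conj_ofReal]]
    rw [Complex.conj_ofReal, mul_assoc, ← Complex.exp_add]
    congr 1
    push_cast
    ring
  have hre : (MSu a t).re = 1 - ‖a‖ * Real.cos (t - Complex.arg a) := by
    rw [MSu, hw]
    simp only [Complex.sub_re, Complex.one_re, Complex.mul_re, Complex.ofReal_re,
      Complex.ofReal_im, Complex.exp_ofReal_mul_I_re, Complex.exp_ofReal_mul_I_im]
    ring
  have him : (MSu a t).im = -(‖a‖ * Real.sin (t - Complex.arg a)) := by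
    rw [MSu, hw]
    simp only [Complex.sub_im, Complex.one_im, Complex.mul_im, Complex.ofReal_re,
      Complex.ofReal_im, Complex.exp_ofReal_mul_I_re, Complex.exp_ofReal_mul_I_im]
    ring
  rw [MSP, MSq, hre, him]
  congr 1
  have hSC := Real.sin_sq_add_cos_sq (t - Complex.arg a)
  nlinarith [hSC]

lemma MSP_integral_le {a : ℂ} {r : ℝ} (h1 : r < 1) (ha : ‖a‖ ≤ r) {α β : ℝ}
    (hαβ : α < β) (hβπ : β - α ≤ Real.pi) :
    ∫ t in α..β, MSP a t ≤ 4 * Real.arctan ((1+r)/(1-r) * Real.tan ((β-α)/4)) := by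
  set ρ := ‖a‖ with hρ
  have h0 : 0 ≤ ρ := norm_nonneg a
  have hρ1 : ρ < 1 := lt_of_le_of_lt ha h1
  have hr0 : 0 ≤ r := le_trans h0 ha
  set s := Complex.arg a with hs
  set θ' := (β - α)/2 with hθ'
  have hθ'0 : 0 < θ' := by rw [hθ']; linarith
  have hθ'2 : θ' ≤ Real.pi/2 := by rw [hθ']; linarith
  have e1 : (∫ t in α..β, MSP a t) = ∫ t in α..β, MSq ρ (t - s) := by
    congr 1; funext t; exact MSP_eq_q a t
  have e2 : (∫ t in α..β, MSq ρ (t - s)) = ∫ u in (α-s)..(β-s), MSq ρ u :=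
    intervalIntegral.integral_comp_sub_right (MSq ρ) s
  set m := (α+β)/2 - s with hm
  have e3 : (∫ u in (α-s)..(β-s), MSq ρ u) = ∫ u in (m-θ')..(m+θ'), MSq ρ u := by
    congr 1 <;> (rw [hm, hθ']; ring)
  have e4 := MSJ_le h0 hρ1 hθ'0 hθ'2 m
  have e5 := MSq_symm_integral h0 hρ1 hθ'0.le hθ'2
  have e6 : Real.arctan ((1+ρ)/(1-ρ) * Real.tan (θ'/2))
      ≤ Real.arctan ((1+r)/(1-r) * Real.tan (θ'/2)) := by
    apply Real.arctan_strictMono.monotone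
    have htn : 0 ≤ Real.tan (θ'/2) := by
      apply Real.tan_nonneg_of_nonneg_of_le_pi_div_two (by linarith) (by linarith)
    apply mul_le_mul_of_nonneg_right _ htn
    apply div_le_div₀ (by linarith) (by linarith) (by linarith) (by linarith)
  have e7 : θ'/2 = (β-α)/4 := by rw [hθ']; ring
  rw [e1, e2, e3]
  calc (∫ u in (m-θ')..(m+θ'), MSq ρ u) ≤ ∫ u in (-θ')..θ', MSq ρ u := e4
    _ = 4 * Real.arctan ((1+ρ)/(1-ρ) * Real.tan (θ'/2)) := e5
    _ ≤ 4 * Real.arctan ((1+r)/(1-r) * Real.tan (θ'/2)) := by linarith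
    _ = _ := by rw [e7]

/-- Minimum separation of pre-vertices: if `e^{iα}, e^{iβ}` are consecutive solutions of
`z B(z) = 1` with `0 < β - α = 2θ* ≤ 2π`, where `B` is a Blaschke product of degree `n`
with zeros `|aₖ| ≤ r < 1`, then `θ* ≥ θ`, the unique root in `(0, π/2)` of
`π = θ + 2n arctan(((1+r)/(1-r)) tan(θ/2))`. -/
theorem min_separation_prevertices (n : ℕ) (r : ℝ) (hr0 : 0 ≤ r) (hr : r < 1)
    (a : Fin n → ℂ) (ha : ∀ k, ‖a k‖ ≤ r) (B : ℂ → ℂ)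
    (hB : ∀ z : ℂ, B z = ∏ k, (z - a k) / (1 - (starRingEnd ℂ) (a k) * z))
    (α β : ℝ) (hαβ : α < β) (hβ : β ≤ α + 2 * Real.pi)
    (hα1 : Complex.exp (α * Complex.I) * B (Complex.exp (α * Complex.I)) = 1)
    (hβ1 : Complex.exp (β * Complex.I) * B (Complex.exp (β * Complex.I)) = 1)
    (hcons : ∀ t : ℝ, α < t → t < β →
      Complex.exp (t * Complex.I) * B (Complex.exp (t * Complex.I)) ≠ 1)
    (θ : ℝ) (hθ : θ ∈ Set.Ioo 0 (Real.pi / 2))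
    (hroot : Real.pi = θ + 2 * n * Real.arctan ((1 + r) / (1 - r) * Real.tan (θ / 2))) :
    θ ≤ (β - α) / 2 := by
  by_contra hcon
  push_neg at hcon
  have hπ := Real.pi_pos
  obtain ⟨hθ0, hθπ2⟩ := hθ
  have hβαπ : β - α < Real.pi := by linarith
  have hak : ∀ k, ‖a k‖ < 1 := fun k => lt_of_le_of_lt (ha k) hr
  set Φ : ℝ → ℝ := fun t => t + ∑ k, (t - 2 * MSpsi (a k) t) with hΦ
  have hexp : ∀ t : ℝ, Complex.exp ((Φ t : ℝ) * Complex.I)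
      = Complex.exp ((t:ℝ)*Complex.I) * B (Complex.exp ((t:ℝ)*Complex.I)) := by
    intro t
    rw [hB]
    have hfac : ∀ k : Fin n, Complex.exp (((t:ℂ) - 2*(MSpsi (a k) t : ℂ)) * Complex.I)
        = (Complex.exp ((t:ℝ)*Complex.I) - a k)
          / (1 - (starRingEnd ℂ) (a k) * Complex.exp ((t:ℝ)*Complex.I)) := by
      intro k
      rw [MSfactor (hak k) t]
      congr 2
      push_cast
      ring
    have hcast : ((Φ t : ℝ) : ℂ) * Complex.I
        = (t:ℂ)*Complex.I + ∑ k : Fin n, ((t:ℂ) - 2*(MSpsi (a k) t : ℂ)) * Complex.I := by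
      rw [hΦ]
      push_cast
      rw [← Finset.sum_mul]
      ring
    rw [hcast, Complex.exp_add, Complex.exp_sum]
    congr 1
    exact Finset.prod_congr rfl (fun k _ => hfac k)
  have hΦd : ∀ t : ℝ, HasDerivAt Φ (1 + ∑ k, MSP (a k) t) t := by
    intro t
    have h2 := HasDerivAt.fun_sum (fun k (_ : k ∈ Finset.univ) => MSphase_hasDeriv (hak k) t)
    have h3 := (hasDerivAt_id' t).fun_add h2
    simpa [hΦ] using h3
  have hMSPnn : ∀ (k : Fin n) (t : ℝ), 0 ≤ MSP (a k) t := fun k t => by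
    rw [MSP_eq_q]; exact MSq_nonneg (norm_nonneg _) (hak k) _
  have hΦmono : StrictMono Φ := strictMono_of_deriv_pos (fun x => by
    rw [(hΦd x).deriv]
    have := Finset.sum_nonneg (fun k (_ : k ∈ Finset.univ) => hMSPnn k x)
    linarith)
  have hΦcont : Continuous Φ :=
    continuous_iff_continuousAt.mpr (fun x => (hΦd x).continuousAt)
  have hval : ∀ t : ℝ, Complex.exp ((t:ℝ) * Complex.I) * B (Complex.exp ((t:ℝ) * Complex.I)) = 1
      → ∃ k : ℤ, Φ t = (k:ℝ) * (2*Real.pi) := by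
    intro t ht
    have h2 : Complex.exp ((Φ t : ℝ) * Complex.I) = 1 := by rw [hexp t]; exact ht
    rw [Complex.exp_eq_one_iff] at h2
    obtain ⟨k, hk⟩ := h2
    refine ⟨k, ?_⟩
    have h4 : ((Φ t : ℝ) : ℂ) = (k:ℂ) * (2*(Real.pi:ℂ)) :=
      mul_right_cancel₀ Complex.I_ne_zero (by rw [hk]; ring)
    have h5 : ((Φ t : ℝ) : ℂ) = (((k:ℝ) * (2*Real.pi) : ℝ) : ℂ) := by
      rw [h4]; push_cast; ring
    exact_mod_cast h5
  obtain ⟨k₁, hk₁⟩ := hval α hα1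
  obtain ⟨k₂, hk₂⟩ := hval β hβ1
  have hltΦ : Φ α < Φ β := hΦmono hαβ
  have hk12 : k₁ < k₂ := by
    have h6 : (k₁:ℝ) * (2*Real.pi) < (k₂:ℝ) * (2*Real.pi) := by rw [← hk₁, ← hk₂]; exact hltΦ
    have h7 : (k₁:ℝ) < (k₂:ℝ) := lt_of_mul_lt_mul_right h6 (by linarith)
    exact_mod_cast h7
  have hk2eq : k₂ = k₁ + 1 := by
    by_contra hne
    have hge : k₁ + 2 ≤ k₂ := by omega
    have hgeR : (k₁:ℝ) + 2 ≤ (k₂:ℝ) := by exact_mod_cast hge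
    have hmid1 : Φ α < ((k₁:ℝ)+1) * (2*Real.pi) := by rw [hk₁]; nlinarith
    have hmid2 : ((k₁:ℝ)+1) * (2*Real.pi) < Φ β := by rw [hk₂]; nlinarith
    obtain ⟨t, ht, hΦt⟩ := intermediate_value_Ioo hαβ.le hΦcont.continuousOn ⟨hmid1, hmid2⟩
    apply hcons t ht.1 ht.2
    rw [← hexp t, hΦt]
    rw [show (((((k₁:ℝ)+1) * (2*Real.pi) : ℝ)):ℂ) * Complex.I
        = ((k₁+1 : ℤ):ℂ) * (2*(Real.pi:ℂ)*Complex.I) by push_cast; ring]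
    exact Complex.exp_int_mul_two_pi_mul_I (k₁+1)
  have hΦβα : Φ β - Φ α = 2*Real.pi := by
    rw [hk₁, hk₂, hk2eq]; push_cast; ring
  have hMSPcont : ∀ k : Fin n, Continuous (MSP (a k)) := by
    intro k
    have he : MSP (a k) = fun t => MSq ‖a k‖ (t - Complex.arg (a k)) := funext (MSP_eq_q _)
    rw [he]
    exact (MSq_cont (norm_nonneg _) (hak k)).comp (by continuity)
  have hsumcont : Continuous (fun t : ℝ => ∑ k, MSP (a k) t) :=
    continuous_finset_sum _ (fun k _ => hMSPcont k)
  have hFTC : ∫ t in α..β, (1 + ∑ k, MSP (a k) t) = Φ β - Φ α :=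
    intervalIntegral.integral_eq_sub_of_hasDerivAt (fun x _ => hΦd x)
      ((continuous_const.add hsumcont).intervalIntegrable α β)
  have hsplit : ∫ t in α..β, (1 + ∑ k, MSP (a k) t)
      = (β - α) + ∑ k, ∫ t in α..β, MSP (a k) t := by
    rw [intervalIntegral.integral_add (intervalIntegrable_const)
      (hsumcont.intervalIntegrable α β), intervalIntegral.integral_const,
      intervalIntegral.integral_finset_sum (fun k _ => (hMSPcont k).intervalIntegrable α β)]
    simp [smul_eq_mul]
  set A := Real.arctan ((1+r)/(1-r) * Real.tan ((β-α)/4)) with hA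
  set A' := Real.arctan ((1+r)/(1-r) * Real.tan (θ/2)) with hA'
  have hbound : ∑ k, ∫ t in α..β, MSP (a k) t ≤ (n:ℝ) * (4 * A) := by
    calc ∑ k, ∫ t in α..β, MSP (a k) t ≤ ∑ _k : Fin n, 4 * A :=
          Finset.sum_le_sum (fun k _ => MSP_integral_le hr (ha k) hαβ hβαπ.le)
      _ = (n:ℝ) * (4 * A) := by
          rw [Finset.sum_const, Finset.card_univ, Fintype.card_fin, nsmul_eq_mul]
  have hAA' : A < A' := by
    apply Real.arctan_strictMono
    have hC : 0 < (1+r)/(1-r) := div_pos (by linarith) (by linarith)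
    apply mul_lt_mul_of_pos_left _ hC
    apply Real.tan_lt_tan_of_nonneg_of_lt_pi_div_two (by linarith) (by linarith) (by linarith)
  have h2π : 2*Real.pi = (β - α) + ∑ k, ∫ t in α..β, MSP (a k) t := by
    rw [← hΦβα, ← hFTC, hsplit]
  have hnA : (n:ℝ) * (4*A) ≤ (n:ℝ) * (4*A') :=
    mul_le_mul_of_nonneg_left (by linarith) (Nat.cast_nonneg n)
  have hfin : 2*Real.pi < 2*Real.pi := by
    calc 2*Real.pi = (β - α) + ∑ k, ∫ t in α..β, MSP (a k) t := h2π
      _ ≤ (β - α) + (n:ℝ) * (4*A) := by linarith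
      _ < 2*θ + (n:ℝ) * (4*A') := by linarith
      _ = 2*Real.pi := by rw [hroot]; push_cast; ring
  exact lt_irrefl _ hfin
end

section
/- Let B be a Blaschke product of degree n with all zeros satisfying |a_k| ≤ r < 1. If e^{iα} and e^{iβ} are consecutive solutions of zB(z) = 1 with 0 < β - α = 2ψ* ≤ 2π, then ψ* ≤ ψ, where ψ ∈ (0, π) is the unique root of π = ψ + 2n·arctan(((1-r)/(1+r))·tan(ψ/2)). -/
open Complex

noncomputable def uu (a : ℂ) (t : ℝ) : ℝ := 1 - (a.re * Real.cos t + a.im * Real.sin t)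
noncomputable def vv (a : ℂ) (t : ℝ) : ℝ := a.im * Real.cos t - a.re * Real.sin t
noncomputable def AA (a : ℂ) (t : ℝ) : ℝ := t - 2 * Real.arctan (vv a t / uu a t)

lemma uu_pos {a : ℂ} (ha : ‖a‖ < 1) (t : ℝ) : 0 < uu a t := by
  have hn : a.re ^ 2 + a.im ^ 2 = ‖a‖ ^ 2 := by
    rw [← Complex.normSq_eq_norm_sq, Complex.normSq_apply]; ring
  have h0 : (0:ℝ) ≤ ‖a‖ := norm_nonneg a
  have h1 : (a.re * Real.cos t + a.im * Real.sin t)^2 ≤ ‖a‖^2 := by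
    nlinarith [Real.sin_sq_add_cos_sq t, sq_nonneg (a.re * Real.sin t - a.im * Real.cos t)]
  have : a.re * Real.cos t + a.im * Real.sin t < 1 := by nlinarith
  simpa [uu] using this

lemma key_id {a : ℂ} (t : ℝ) : 2 * uu a t - ((uu a t)^2 + (vv a t)^2) = 1 - ‖a‖^2 := by
  have hn : a.re ^ 2 + a.im ^ 2 = ‖a‖ ^ 2 := by
    rw [← Complex.normSq_eq_norm_sq, Complex.normSq_apply]; ring
  simp only [uu, vv]
  nlinarith [Real.sin_sq_add_cos_sq t]

lemma hasDerivAt_AA {a : ℂ} (ha : ‖a‖ < 1) (t : ℝ) :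
    HasDerivAt (AA a) ((1 - ‖a‖^2) / ((uu a t)^2 + (vv a t)^2)) t := by
  have hU := uu_pos ha t
  have hUne : uu a t ≠ 0 := ne_of_gt hU
  have hu : HasDerivAt (uu a) (-(vv a t)) t := by
    have := ((Real.hasDerivAt_cos t).const_mul a.re).add ((Real.hasDerivAt_sin t).const_mul a.im)
    have h2 := (hasDerivAt_const t (1:ℝ)).sub this
    convert h2 using 1
    all_goals first | rfl | (funext s; simp [uu]; ring) | (funext s; simp [uu]) | (simp [vv]; ring) | simp [vv]
  have hv : HasDerivAt (vv a) (uu a t - 1) t := by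
    have := ((Real.hasDerivAt_cos t).const_mul a.im).sub ((Real.hasDerivAt_sin t).const_mul a.re)
    convert this using 1
    all_goals first | rfl | (funext s; simp [vv]; ring) | (funext s; simp [vv]) | (simp [uu]; ring) | simp [uu]
  have hq : HasDerivAt (fun s => vv a s / uu a s)
      (((uu a t - 1) * uu a t - vv a t * (-(vv a t))) / (uu a t)^2) t := hv.div hu hUne
  have harc := hq.arctan
  have hA := (hasDerivAt_id t).sub (harc.const_mul 2)
  have hA' : HasDerivAt (AA a) _ t := hA
  convert hA' using 1
  have hk := key_id (a := a) t
  have hUV : 0 < (uu a t)^2 + (vv a t)^2 := by positivity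
  rw [show (1:ℝ) - ‖a‖^2 = 2 * uu a t - ((uu a t)^2 + (vv a t)^2) from (key_id t).symm]
  field_simp
  ring

lemma exp_AA {a : ℂ} (ha : ‖a‖ < 1) (t : ℝ) :
    Complex.exp ((AA a t : ℝ) * I) =
      (Complex.exp (t * I) - a) / (1 - (starRingEnd ℂ) a * Complex.exp (t * I)) := by
  set z := Complex.exp ((t:ℝ) * I) with hz
  set U := uu a t with hUdef
  set V := vv a t with hVdef
  have hU : 0 < U := uu_pos ha t
  set R := Real.sqrt (U^2 + V^2) with hRdef
  have hR : 0 < R := Real.sqrt_pos.mpr (by positivity)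
  have hRC : (R:ℂ) ≠ 0 := by exact_mod_cast hR.ne'
  set φ := Real.arctan (V / U) with hφdef
  have hsq : Real.sqrt (1 + (V/U)^2) = R / U := by
    rw [show 1 + (V/U)^2 = (U^2 + V^2) / U^2 by field_simp]
    rw [Real.sqrt_div (by positivity) _, Real.sqrt_sq hU.le]
  have hcos : Real.cos φ = U / R := by
    rw [hφdef, Real.cos_arctan, hsq]; field_simp
  have hsin : Real.sin φ = V / R := by
    rw [hφdef, Real.sin_arctan, hsq]
    rw [div_div_div_eq]
    rw [mul_comm U R, mul_div_mul_right _ _ hU.ne']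
  have h1 : (R:ℂ) * Complex.exp ((φ:ℝ) * I) = (U:ℝ) + (V:ℝ) * I := by
    rw [Complex.exp_mul_I, ← Complex.ofReal_cos, ← Complex.ofReal_sin, hcos, hsin]
    push_cast
    field_simp
  have h2 : 1 - (starRingEnd ℂ) a * z = (U:ℝ) + (V:ℝ) * I := by
    apply Complex.ext <;>
      simp [hz, Complex.mul_re, Complex.mul_im, Complex.exp_ofReal_mul_I_re,
        Complex.exp_ofReal_mul_I_im, Complex.cos_ofReal_re, Complex.sin_ofReal_re,
        uu, vv, hUdef, hVdef] <;> ring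
  have hw : 1 - (starRingEnd ℂ) a * z = (R:ℂ) * Complex.exp ((φ:ℝ) * I) := h2.trans h1.symm
  have hwne : 1 - (starRingEnd ℂ) a * z ≠ 0 := by
    rw [hw]; exact mul_ne_zero hRC (Complex.exp_ne_zero _)
  have hwconj : (starRingEnd ℂ) (1 - (starRingEnd ℂ) a * z) = (R:ℂ) * Complex.exp (-((φ:ℝ) * I)) := by
    rw [hw, map_mul, Complex.conj_ofReal, ← Complex.exp_conj]
    congr 1
    simp [map_mul, Complex.conj_ofReal, Complex.conj_I]
  have hzconj : z * (starRingEnd ℂ) z = 1 := by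
    rw [Complex.mul_conj]
    norm_cast
    simp [hz, Complex.normSq_eq_norm_sq, Complex.norm_exp_ofReal_mul_I]
  have hza : z - a = z * (starRingEnd ℂ) (1 - (starRingEnd ℂ) a * z) := by
    have h3 : (starRingEnd ℂ) (1 - (starRingEnd ℂ) a * z) = 1 - a * (starRingEnd ℂ) z := by
      simp
    rw [h3]
    calc z - a = z - a * (z * (starRingEnd ℂ) z) := by rw [hzconj]; ring
    _ = z * (1 - a * (starRingEnd ℂ) z) := by ring
  rw [eq_div_iff hwne]
  rw [hza, hwconj, hw]
  rw [show ((AA a t : ℝ) : ℂ) * I = ((t:ℝ) * I + -((φ:ℝ) * I)) + -((φ:ℝ) * I) by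
    rw [show AA a t = t - 2 * φ from rfl]; push_cast; ring]
  rw [Complex.exp_add, Complex.exp_add, hz]
  have hE : Complex.exp (-((φ:ℝ) * I)) * Complex.exp ((φ:ℝ) * I) = 1 := by
    rw [← Complex.exp_add]; simp
  linear_combination (Complex.exp ((t:ℝ) * I) * Complex.exp (-((φ:ℝ) * I)) * (R:ℂ)) * hE

lemma AA_strictMono {a : ℂ} (ha : ‖a‖ < 1) : StrictMono (AA a) := by
  apply strictMono_of_deriv_pos
  intro t
  rw [(hasDerivAt_AA ha t).deriv]
  have h1 : (0:ℝ) < 1 - ‖a‖^2 := by nlinarith [norm_nonneg a]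
  have h2 : (0:ℝ) < (uu a t)^2 + (vv a t)^2 := by
    have := uu_pos ha t; positivity
  positivity

lemma AA_continuous {a : ℂ} (ha : ‖a‖ < 1) : Continuous (AA a) :=
  continuous_iff_continuousAt.mpr fun t => (hasDerivAt_AA ha t).continuousAt

lemma AA_add_two_pi (a : ℂ) (t : ℝ) : AA a (t + 2 * Real.pi) = AA a t + 2 * Real.pi := by
  simp only [AA, uu, vv, Real.cos_add_two_pi, Real.sin_add_two_pi]
  ring

lemma AA_real (ρ t : ℝ) :
    AA (ρ:ℂ) t = t + 2 * Real.arctan (ρ * Real.sin t / (1 - ρ * Real.cos t)) := by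
  simp only [AA, uu, vv, Complex.ofReal_re, Complex.ofReal_im, zero_mul, mul_zero, zero_sub,
    add_zero]
  rw [neg_div, Real.arctan_neg]
  ring

lemma AA_shift (a : ℂ) (t : ℝ) :
    AA a t = AA (‖a‖ : ℂ) (t - Complex.arg a) + Complex.arg a := by
  have hre : a.re = ‖a‖ * Real.cos (Complex.arg a) := by
    rw [Complex.norm_mul_cos_arg]
  have him : a.im = ‖a‖ * Real.sin (Complex.arg a) := by
    rw [Complex.norm_mul_sin_arg]
  have hu : uu a t = uu (‖a‖ : ℂ) (t - Complex.arg a) := by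
    simp only [uu, Complex.ofReal_re, Complex.ofReal_im, zero_mul, add_zero, hre, him,
      Real.cos_sub]
    ring
  have hv : vv a t = vv (‖a‖ : ℂ) (t - Complex.arg a) := by
    simp only [vv, Complex.ofReal_re, Complex.ofReal_im, zero_mul, zero_sub, hre, him,
      Real.sin_sub]
    ring
  simp only [AA, hu, hv]
  ring

lemma arctan_nonneg {x : ℝ} (hx : 0 ≤ x) : 0 ≤ Real.arctan x := by
  rw [← Real.arctan_zero]
  exact Real.arctan_strictMono.monotone hx

lemma denom_eq (ρ t : ℝ) : (uu (ρ:ℂ) t)^2 + (vv (ρ:ℂ) t)^2 = 1 - 2*ρ*Real.cos t + ρ^2 := by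
  simp only [uu, vv, Complex.ofReal_re, Complex.ofReal_im, zero_mul, add_zero, zero_sub]
  nlinarith [Real.sin_sq_add_cos_sq t]

lemma factor_min {ρ : ℝ} (hρ0 : 0 ≤ ρ) (hρ : ρ < 1) {ψ : ℝ} (hψ0 : 0 < ψ)
    (hψπ : ψ < Real.pi) (s : ℝ) :
    2*ψ - 4 * Real.arctan (ρ * Real.sin ψ / (1 + ρ * Real.cos ψ)) ≤
      AA (ρ:ℂ) (s + 2*ψ) - AA (ρ:ℂ) s := by
  have hnorm : ‖(ρ:ℂ)‖ = ρ := by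
    rw [Complex.norm_real, Real.norm_eq_abs, _root_.abs_of_nonneg hρ0]
  have h1 : ‖(ρ:ℂ)‖ < 1 := by rw [hnorm]; exact hρ
  have hsinψ : 0 < Real.sin ψ := Real.sin_pos_of_pos_of_lt_pi hψ0 hψπ
  have hcosb : |Real.cos ψ| ≤ 1 := Real.abs_cos_le_one ψ
  have hden1 : 0 < 1 + ρ * Real.cos ψ := by
    rcases abs_le.mp hcosb with ⟨hl, hr⟩
    nlinarith
  have hden2 : 0 < 1 - ρ * Real.cos ψ := by
    rcases abs_le.mp hcosb with ⟨hl, hr⟩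
    nlinarith
  set Fn : ℝ → ℝ := fun x => AA (ρ:ℂ) (x + 2*ψ) - AA (ρ:ℂ) x with hFn
  -- value of Fn at π - ψ
  have hFval : Fn (Real.pi - ψ) =
      2*ψ - 4 * Real.arctan (ρ * Real.sin ψ / (1 + ρ * Real.cos ψ)) := by
    have e1 : Real.pi - ψ + 2*ψ = Real.pi + ψ := by ring
    rw [hFn]
    simp only
    rw [e1, AA_real, AA_real]
    rw [show Real.sin (Real.pi + ψ) = -Real.sin ψ by
        simp [Real.sin_add]]
    rw [show Real.cos (Real.pi + ψ) = -Real.cos ψ by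
        simp [Real.cos_add]]
    rw [Real.sin_pi_sub, Real.cos_pi_sub]
    rw [show ρ * -Real.sin ψ / (1 - ρ * -Real.cos ψ) = -(ρ * Real.sin ψ / (1 + ρ * Real.cos ψ)) by
        simp only [mul_neg, sub_neg_eq_add]; ring]
    rw [show ρ * Real.sin ψ / (1 - ρ * -Real.cos ψ) = ρ * Real.sin ψ / (1 + ρ * Real.cos ψ) by
        ring_nf]
    rw [Real.arctan_neg]
    ring
  -- value of Fn at -ψ
  have hFval2 : Fn (-ψ) = 2*ψ + 4 * Real.arctan (ρ * Real.sin ψ / (1 - ρ * Real.cos ψ)) := by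
    rw [hFn]
    simp only
    rw [show -ψ + 2*ψ = ψ by ring, AA_real, AA_real, Real.sin_neg, Real.cos_neg]
    rw [show ρ * -Real.sin ψ / (1 - ρ * Real.cos ψ) = -(ρ * Real.sin ψ / (1 - ρ * Real.cos ψ)) by
        ring]
    rw [Real.arctan_neg]
    ring
  have hbound : 2*ψ - 4 * Real.arctan (ρ * Real.sin ψ / (1 + ρ * Real.cos ψ)) ≤ Fn (-ψ) := by
    rw [hFval2]
    have a1 : 0 ≤ Real.arctan (ρ * Real.sin ψ / (1 + ρ * Real.cos ψ)) :=
      arctan_nonneg (by positivity)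
    have a2 : 0 ≤ Real.arctan (ρ * Real.sin ψ / (1 - ρ * Real.cos ψ)) :=
      arctan_nonneg (by positivity)
    linarith
  -- periodicity
  have hFper : Function.Periodic Fn (2*Real.pi) := by
    intro x
    rw [hFn]
    simp only
    rw [show x + 2*Real.pi + 2*ψ = (x + 2*ψ) + 2*Real.pi by ring, AA_add_two_pi, AA_add_two_pi]
    ring
  have hFcont : Continuous Fn :=
    ((AA_continuous h1).comp (by continuity)).sub (AA_continuous h1)
  -- min on a period
  have hpi : (0:ℝ) < 2*Real.pi := by positivity
  obtain ⟨s₀, hs₀mem, hs₀min⟩ := (isCompact_Icc (a := (0:ℝ)) (b := 2*Real.pi)).exists_isMinOn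
    ⟨0, by constructor <;> [rfl; positivity]⟩ hFcont.continuousOn
  have hglobal : ∀ x, Fn s₀ ≤ Fn x := by
    intro x
    obtain ⟨y, hy, hxy⟩ := hFper.exists_mem_Ico₀ hpi x
    rw [hxy]
    exact hs₀min (Set.Ico_subset_Icc_self hy)
  have hlocal : IsLocalMin Fn s₀ := Filter.Eventually.of_forall hglobal
  -- derivative at s₀
  have hD : ∀ t : ℝ, HasDerivAt Fn
      ((1 - ρ^2) / (1 - 2*ρ*Real.cos (t + 2*ψ) + ρ^2) * 1 -
       (1 - ρ^2) / (1 - 2*ρ*Real.cos t + ρ^2)) t := by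
    intro t
    have d1 : HasDerivAt (fun x : ℝ => AA (ρ:ℂ) (x + 2*ψ))
        ((1 - ‖(ρ:ℂ)‖^2) / ((uu (ρ:ℂ) (t + 2*ψ))^2 + (vv (ρ:ℂ) (t + 2*ψ))^2) * 1) t :=
      (hasDerivAt_AA h1 (t + 2*ψ)).comp (h₂ := AA (ρ:ℂ)) t ((hasDerivAt_id' t).add_const (2*ψ))
    have d2 := hasDerivAt_AA h1 t
    have := d1.sub d2
    rw [hnorm, denom_eq, denom_eq] at this
    exact this
  have hzero := hlocal.hasDerivAt_eq_zero (hD s₀)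
  -- cos equation
  have hρcase : ρ = 0 ∨ 0 < ρ := hρ0.eq_or_lt.imp Eq.symm id
  rcases hρcase with hzeroρ | hρpos
  · -- ρ = 0 : Fn is constant 2ψ
    subst hzeroρ
    have : Fn s = 2*ψ := by
      rw [hFn]; simp only; rw [AA_real, AA_real]; simp
    rw [hFn] at this
    simp only at this
    rw [this]
    simp only [zero_mul, zero_div, Real.arctan_zero]
    linarith
  · have hnum : (0:ℝ) < 1 - ρ^2 := by nlinarith
    have hd1 : 0 < 1 - 2*ρ*Real.cos (s₀ + 2*ψ) + ρ^2 := by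
      rcases abs_le.mp (Real.abs_cos_le_one (s₀ + 2*ψ)) with ⟨hl, hr⟩
      nlinarith
    have hd2 : 0 < 1 - 2*ρ*Real.cos s₀ + ρ^2 := by
      rcases abs_le.mp (Real.abs_cos_le_one s₀) with ⟨hl, hr⟩
      nlinarith
    have hcoseq : Real.cos (s₀ + 2*ψ) = Real.cos s₀ := by
      have h' : (1 - ρ^2) / (1 - 2*ρ*Real.cos (s₀ + 2*ψ) + ρ^2) =
          (1 - ρ^2) / (1 - 2*ρ*Real.cos s₀ + ρ^2) := by linarith
      rw [div_eq_div_iff hd1.ne' hd2.ne'] at h'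
      have h5 : 2*ρ*Real.cos (s₀ + 2*ψ) = 2*ρ*Real.cos s₀ := by nlinarith
      exact mul_left_cancel₀ (by positivity : (2*ρ) ≠ (0:ℝ)) h5
    -- sin(s₀ + ψ) = 0
    have hsin0 : Real.sin (s₀ + ψ) = 0 := by
      have := Real.cos_sub_cos s₀ (s₀ + 2*ψ)
      rw [hcoseq] at this
      have h2 : Real.sin ((s₀ + (s₀ + 2*ψ))/2) * Real.sin ((s₀ - (s₀ + 2*ψ))/2) = 0 := by
        linarith
      rw [show (s₀ + (s₀ + 2*ψ))/2 = s₀ + ψ by ring,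
        show (s₀ - (s₀ + 2*ψ))/2 = -ψ by ring, Real.sin_neg] at h2
      rcases mul_eq_zero.mp h2 with h3 | h3
      · exact h3
      · exact absurd h3 (by simp; nlinarith)
    obtain ⟨k, hk⟩ := Real.sin_eq_zero_iff.mp hsin0
    rcases Int.even_or_odd k with ⟨j, hj⟩ | ⟨j, hj⟩
    · -- s₀ = -ψ + j * (2π)
      have hs₀ : s₀ = -ψ + (j:ℝ) * (2*Real.pi) := by
        have : ((j:ℝ) + (j:ℝ)) * Real.pi = s₀ + ψ := by
          rw [← hk, hj]; push_cast; ring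
        linarith
      have : Fn s₀ = Fn (-ψ) := by rw [hs₀]; exact (hFper.int_mul j) (-ψ)
      calc 2*ψ - 4 * Real.arctan (ρ * Real.sin ψ / (1 + ρ * Real.cos ψ)) ≤ Fn (-ψ) := hbound
      _ = Fn s₀ := this.symm
      _ ≤ Fn s := hglobal s
    · -- s₀ = (π - ψ) + j * (2π)
      have hs₀ : s₀ = (Real.pi - ψ) + (j:ℝ) * (2*Real.pi) := by
        have : ((2*(j:ℝ) + 1)) * Real.pi = s₀ + ψ := by
          rw [← hk, hj]; push_cast; ring
        linarith
      have : Fn s₀ = Fn (Real.pi - ψ) := by rw [hs₀]; exact (hFper.int_mul j) (Real.pi - ψ)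
      calc 2*ψ - 4 * Real.arctan (ρ * Real.sin ψ / (1 + ρ * Real.cos ψ)) = Fn (Real.pi - ψ) :=
        hFval.symm
      _ = Fn s₀ := this.symm
      _ ≤ Fn s := hglobal s

lemma identity_arctan {ρ : ℝ} (hρ0 : 0 ≤ ρ) (hρ : ρ < 1) {ψ : ℝ} (hψ0 : 0 < ψ)
    (hψπ : ψ < Real.pi) :
    2*ψ - 4 * Real.arctan (ρ * Real.sin ψ / (1 + ρ * Real.cos ψ)) =
      4 * Real.arctan ((1-ρ)/(1+ρ) * Real.tan (ψ/2)) := by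
  have hρ1 : (0:ℝ) < 1 + ρ := by linarith
  have hhalf0 : 0 < ψ/2 := by linarith
  have hhalfπ : ψ/2 < Real.pi/2 := by linarith
  have hcc : 0 < Real.cos (ψ/2) := Real.cos_pos_of_mem_Ioo ⟨by linarith, hhalfπ⟩
  have hss : 0 < Real.sin (ψ/2) := Real.sin_pos_of_pos_of_lt_pi hhalf0 (by linarith [Real.pi_pos])
  set t := Real.tan (ψ/2) with ht
  set c := (1-ρ)/(1+ρ) with hc
  have hc0 : 0 ≤ c := div_nonneg (by linarith) (by linarith)
  have ht0 : 0 < t := Real.tan_pos_of_pos_of_lt_pi_div_two hhalf0 hhalfπ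
  have hteq : t = Real.sin (ψ/2) / Real.cos (ψ/2) := Real.tan_eq_sin_div_cos _
  have hsin : Real.sin ψ = 2 * Real.sin (ψ/2) * Real.cos (ψ/2) := by
    have h := Real.sin_two_mul (ψ/2)
    rw [show 2*(ψ/2) = ψ by ring] at h
    exact h
  have hcos : Real.cos ψ = 2 * Real.cos (ψ/2)^2 - 1 := by
    have h := Real.cos_two_mul (ψ/2)
    rw [show 2*(ψ/2) = ψ by ring] at h
    exact h
  have hpyth := Real.sin_sq_add_cos_sq (ψ/2)
  have hden : 0 < 1 + ρ * Real.cos ψ := by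
    rcases abs_le.mp (Real.abs_cos_le_one ψ) with ⟨hl, hr⟩
    nlinarith
  have hct : 0 ≤ c * t^2 := by positivity
  have hden3 : 0 < 1 - t * -(c*t) := by nlinarith
  have harg : ρ * Real.sin ψ / (1 + ρ * Real.cos ψ) = (t + -(c*t))/(1 - t * -(c*t)) := by
    rw [div_eq_div_iff hden.ne' hden3.ne']
    rw [hsin, hcos, hteq, hc]
    set ss := Real.sin (ψ/2)
    set cc := Real.cos (ψ/2)
    field_simp
    linear_combination (2 * ρ * ss * cc * (1+ρ) * (1-ρ) - 2 * ss * cc * ρ^2 * (1-ρ) + 2 * ρ * (1-ρ) * (1 - cc*ss)) * hpyth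
  have hmul : t * -(c*t) < 1 := by nlinarith
  have hadd := Real.arctan_add hmul
  have harctan_t : Real.arctan t = ψ/2 := by
    rw [ht]
    exact Real.arctan_tan (by linarith) hhalfπ
  rw [harg, ← hadd, Real.arctan_neg, harctan_t]
  ring

lemma factor_lb {r : ℝ} (hr0 : 0 ≤ r) (hr : r < 1) {a : ℂ} (ha : ‖a‖ ≤ r) {ψ : ℝ}
    (hψ0 : 0 < ψ) (hψπ : ψ < Real.pi) (s : ℝ) :
    4 * Real.arctan ((1-r)/(1+r) * Real.tan (ψ/2)) ≤ AA a (s + 2*ψ) - AA a s := by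
  set ρ := ‖a‖ with hρdef
  have hρ0 : 0 ≤ ρ := norm_nonneg a
  have hρ1 : ρ < 1 := lt_of_le_of_lt ha hr
  have h1 : AA a (s + 2*ψ) - AA a s = AA (ρ:ℂ) ((s - Complex.arg a) + 2*ψ) -
      AA (ρ:ℂ) (s - Complex.arg a) := by
    rw [AA_shift a (s + 2*ψ), AA_shift a s]
    ring_nf
    rfl
  rw [h1]
  calc 4 * Real.arctan ((1-r)/(1+r) * Real.tan (ψ/2))
      ≤ 4 * Real.arctan ((1-ρ)/(1+ρ) * Real.tan (ψ/2)) := by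
        have htan : 0 < Real.tan (ψ/2) :=
          Real.tan_pos_of_pos_of_lt_pi_div_two (by linarith) (by linarith)
        have hcc : (1-r)/(1+r) ≤ (1-ρ)/(1+ρ) := by
          rw [div_le_div_iff₀ (by linarith) (by linarith)]
          nlinarith
        have := Real.arctan_strictMono.monotone
          (mul_le_mul_of_nonneg_right hcc htan.le)
        linarith
    _ = 2*ψ - 4 * Real.arctan (ρ * Real.sin ψ / (1 + ρ * Real.cos ψ)) :=
        (identity_arctan hρ0 hρ1 hψ0 hψπ).symm
    _ ≤ _ := factor_min hρ0 hρ1 hψ0 hψπ _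


/-- Maximum separation of pre-vertices: if `e^{iα}, e^{iβ}` are consecutive solutions of
`z B(z) = 1` with `0 < β - α = 2ψ* ≤ 2π`, where `B` is a Blaschke product of degree `n`
with zeros `|aₖ| ≤ r < 1`, then `ψ* ≤ ψ`, the unique root in `(0, π)` of
`π = ψ + 2n arctan(((1-r)/(1+r)) tan(ψ/2))`. -/
theorem max_separation_prevertices (n : ℕ) (r : ℝ) (hr0 : 0 ≤ r) (hr : r < 1)
    (a : Fin n → ℂ) (ha : ∀ k, ‖a k‖ ≤ r) (B : ℂ → ℂ)
    (hB : ∀ z : ℂ, B z = ∏ k, (z - a k) / (1 - (starRingEnd ℂ) (a k) * z))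
    (α β : ℝ) (hαβ : α < β) (hβ : β ≤ α + 2 * Real.pi)
    (hα1 : Complex.exp (α * Complex.I) * B (Complex.exp (α * Complex.I)) = 1)
    (hβ1 : Complex.exp (β * Complex.I) * B (Complex.exp (β * Complex.I)) = 1)
    (hcons : ∀ t : ℝ, α < t → t < β →
      Complex.exp (t * Complex.I) * B (Complex.exp (t * Complex.I)) ≠ 1)
    (ψ : ℝ) (hψ : ψ ∈ Set.Ioo 0 Real.pi)
    (hroot : Real.pi = ψ + 2 * n * Real.arctan ((1 - r) / (1 + r) * Real.tan (ψ / 2))) :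
    (β - α) / 2 ≤ ψ := by
  obtain ⟨hψ0, hψπ⟩ := hψ
  rcases Nat.eq_zero_or_pos n with hn0 | hn1
  · subst hn0
    simp at hroot
    linarith
  have hak : ∀ k, ‖a k‖ < 1 := fun k => lt_of_le_of_lt (ha k) hr
  set θ : ℝ → ℝ := fun t => t + ∑ k, AA (a k) t with hθdef
  have hexp : ∀ t : ℝ, Complex.exp ((θ t : ℝ) * I) =
      Complex.exp (t * I) * B (Complex.exp (t * I)) := by
    intro t
    rw [hB]
    rw [hθdef]
    simp only
    push_cast
    rw [add_mul, Complex.exp_add, Finset.sum_mul, Complex.exp_sum]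
    congr 1
    exact Finset.prod_congr rfl fun k _ => exp_AA (hak k) t
  have hθmono : StrictMono θ := by
    intro x y hxy
    have h1 : ∑ k, AA (a k) x ≤ ∑ k, AA (a k) y :=
      Finset.sum_le_sum fun k _ => ((AA_strictMono (hak k)).monotone hxy.le)
    simpa [hθdef] using add_lt_add_of_lt_of_le hxy h1
  have hθcont : Continuous θ :=
    continuous_id.add (continuous_finset_sum _ fun k _ => AA_continuous (hak k))
  -- θ α and θ β are multiples of 2π
  have hmul : ∀ t : ℝ, Complex.exp (t * I) * B (Complex.exp (t * I)) = 1 →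
      ∃ m : ℤ, θ t = m * (2 * Real.pi) := by
    intro t h
    have h2 : Complex.exp ((θ t : ℝ) * I) = 1 := by rw [hexp t]; exact h
    obtain ⟨m, hm⟩ := Complex.exp_eq_one_iff.mp h2
    refine ⟨m, ?_⟩
    have h3 : ((θ t : ℝ) : ℂ) = (m : ℂ) * (2 * Real.pi) := by
      apply mul_right_cancel₀ Complex.I_ne_zero
      rw [hm]; ring
    exact_mod_cast h3
  obtain ⟨mα, hmα⟩ := hmul α hα1
  obtain ⟨mβ, hmβ⟩ := hmul β hβ1
  have hπ : (0:ℝ) < Real.pi := Real.pi_pos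
  have hmlt : mα < mβ := by
    have := hθmono hαβ
    rw [hmα, hmβ] at this
    exact_mod_cast lt_of_mul_lt_mul_right this (by positivity)
  have h2π : θ β - θ α = 2 * Real.pi := by
    by_contra hne
    have hge : mα + 2 ≤ mβ := by
      rcases lt_or_ge mβ (mα + 2) with h | h
      · exfalso
        have : mβ = mα + 1 := by omega
        apply hne
        rw [hmα, hmβ, this]
        push_cast
        ring
      · exact h
    have hmem : θ α + 2 * Real.pi ∈ Set.Ioo (θ α) (θ β) := by
      constructor
      · linarith
      · rw [hmβ, hmα]
        have : ((mα:ℝ) + 2) * (2*Real.pi) ≤ (mβ:ℝ) * (2*Real.pi) := by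
          have : ((mα:ℝ) + 2) ≤ (mβ:ℝ) := by exact_mod_cast hge
          nlinarith
        nlinarith
    obtain ⟨t, htmem, htval⟩ := intermediate_value_Ioo hαβ.le hθcont.continuousOn hmem
    apply hcons t htmem.1 htmem.2
    rw [← hexp t, htval]
    push_cast
    rw [add_mul, Complex.exp_add]
    rw [show ((2:ℂ) * Real.pi) * I = 2 * Real.pi * I by ring, Complex.exp_two_pi_mul_I]
    rw [hexp α, hα1, mul_one]
  -- each factor increment is positive
  have hinc : ∀ k : Fin n, 0 < AA (a k) β - AA (a k) α := fun k =>
    sub_pos.mpr (AA_strictMono (hak k) hαβ)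
  have hsum : 2 * Real.pi = (β - α) + ∑ k, (AA (a k) β - AA (a k) α) := by
    rw [← h2π, hθdef]
    simp only
    rw [Finset.sum_sub_distrib]
    ring
  have hsumpos : 0 < ∑ k, (AA (a k) β - AA (a k) α) :=
    Finset.sum_pos (fun k _ => hinc k) (Finset.univ_nonempty_iff.mpr ⟨⟨0, hn1⟩⟩)
  set ψs := (β - α) / 2 with hψs
  have hψs0 : 0 < ψs := by rw [hψs]; linarith
  have hψsπ : ψs < Real.pi := by rw [hψs]; nlinarith
  -- lower bound each increment
  have hlb : ∀ k : Fin n, 4 * Real.arctan ((1-r)/(1+r) * Real.tan (ψs/2)) ≤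
      AA (a k) β - AA (a k) α := by
    intro k
    have := factor_lb hr0 hr (ha k) hψs0 hψsπ α
    rw [show α + 2*ψs = β by rw [hψs]; ring] at this
    exact this
  have hsumlb : (n:ℝ) * (4 * Real.arctan ((1-r)/(1+r) * Real.tan (ψs/2))) ≤
      ∑ k, (AA (a k) β - AA (a k) α) := by
    calc (n:ℝ) * (4 * Real.arctan ((1-r)/(1+r) * Real.tan (ψs/2)))
        = ∑ _k : Fin n, 4 * Real.arctan ((1-r)/(1+r) * Real.tan (ψs/2)) := by
          rw [Finset.sum_const, Finset.card_univ, Fintype.card_fin]; ring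
      _ ≤ _ := Finset.sum_le_sum fun k _ => hlb k
  have hfinal : ψs + 2 * n * Real.arctan ((1-r)/(1+r) * Real.tan (ψs/2)) ≤ Real.pi := by
    have h3 : β - α = 2 * ψs := by rw [hψs]; ring
    rw [h3] at hsum
    nlinarith
  -- conclude by monotonicity
  by_contra hcon
  push_neg at hcon
  have hc0 : 0 < (1-r)/(1+r) := div_pos (by linarith) (by linarith)
  have htanlt : Real.tan (ψ/2) < Real.tan (ψs/2) := by
    apply Real.strictMonoOn_tan
    · constructor <;> [linarith; linarith]
    · constructor <;> [linarith; linarith]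
    · linarith
  have harclt : Real.arctan ((1-r)/(1+r) * Real.tan (ψ/2)) ≤
      Real.arctan ((1-r)/(1+r) * Real.tan (ψs/2)) :=
    Real.arctan_strictMono.monotone (by nlinarith)
  have hn1' : (1:ℝ) ≤ (n:ℝ) := by exact_mod_cast hn1
  nlinarith [hroot, hfinal, harclt, hcon]
end
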